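/- arXiv:2309.08013 — 9 statements merged into one kernel-verified Lean document; each statement's English description precedes it below -/
import Mathlib

section
/- Let λ1 > λ2 > λ3 > 0, let e = √((λ1−λ2)/(λ1−λ3)) be the pencil eccentricity, and let ν = (ν1,ν2) satisfy ν2 > 0 and ν1 + λ3ν2 > 0. Define f(ν) = e √((ν1+λ3ν2)/(ν1+λ2ν2)). Then 0 < f(ν) < e < 1, and the billiard rotation number satisfies ρ̂(e, f(ν)) = F(ω(ν), e)/(2K(e)), where ω(ν) = arcsin √((λ1−λ3)ν2/(λ1ν2+ν1)). (This is the rotation number formula ρ(ν) for the Poncelet map of the pencil element C_ν.) -/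
open Real

/-- Incomplete elliptic integral of the first kind `F(φ,e)`. -/
noncomputable def ellF (φ e : ℝ) : ℝ :=
  ∫ τ in (0:ℝ)..φ, 1 / Real.sqrt (1 - e ^ 2 * Real.sin τ ^ 2)

/-- Complete elliptic integral of the first kind `K(e)`. -/
noncomputable def ellK (e : ℝ) : ℝ := ellF (Real.pi / 2) e

/-- The angle `ω̂(e,f)`. -/
noncomputable def omegaHat (e f : ℝ) : ℝ :=
  Real.arcsin (Real.sqrt ((e ^ 2 - f ^ 2) / (e ^ 2 * (1 - f ^ 2))))

/-- The billiard rotation number `ρ̂(e,f)`. -/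
noncomputable def rhoHat (e f : ℝ) : ℝ := ellF (omegaHat e f) e / (2 * ellK e)

/-- the Poncelet rotation number formula for an element of a pencil with
eigenvalues `λ1 > λ2 > λ3 > 0`, eccentricity `e`, and valid parameter `ν = (ν1, ν2)`. -/
theorem pencil_rotation_number (l1 l2 l3 ν1 ν2 : ℝ)
    (h12 : l2 < l1) (h23 : l3 < l2) (h3 : 0 < l3)
    (hν2 : 0 < ν2) (hν : 0 < ν1 + l3 * ν2) :
    let e := Real.sqrt ((l1 - l2) / (l1 - l3))
    let fν := e * Real.sqrt ((ν1 + l3 * ν2) / (ν1 + l2 * ν2))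
    let ω := Real.arcsin (Real.sqrt ((l1 - l3) * ν2 / (l1 * ν2 + ν1)))
    0 < fν ∧ fν < e ∧ e < 1 ∧
      rhoHat e fν = ellF ω e / (2 * ellK e) := by
  intro e fν ω
  have h13 : l3 < l1 := h23.trans h12
  have ha : 0 < ν1 + l3 * ν2 := hν
  have hb : 0 < ν1 + l2 * ν2 := by nlinarith
  have hc : 0 < ν1 + l1 * ν2 := by nlinarith
  have hab : ν1 + l3 * ν2 < ν1 + l2 * ν2 := by nlinarith
  have hq : (0:ℝ) < (l1 - l2) / (l1 - l3) := div_pos (by linarith) (by linarith)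
  have he2 : e ^ 2 = (l1 - l2) / (l1 - l3) := by
    simpa using Real.sq_sqrt hq.le
  have hepos : 0 < e := Real.sqrt_pos.2 hq
  have hr2 : Real.sqrt ((ν1 + l3 * ν2) / (ν1 + l2 * ν2)) ^ 2
      = (ν1 + l3 * ν2) / (ν1 + l2 * ν2) := Real.sq_sqrt (by positivity)
  have hf2 : fν ^ 2 = (l1 - l2) / (l1 - l3) * ((ν1 + l3 * ν2) / (ν1 + l2 * ν2)) := by
    show (e * _) ^ 2 = _
    rw [mul_pow, he2, hr2]
  have hfpos : 0 < fν := by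
    apply mul_pos hepos
    exact Real.sqrt_pos.2 (by positivity)
  refine ⟨hfpos, ?_, ?_, ?_⟩
  · have : Real.sqrt ((ν1 + l3 * ν2) / (ν1 + l2 * ν2)) < 1 := by
      rw [show (1:ℝ) = Real.sqrt 1 by simp]
      apply Real.sqrt_lt_sqrt (by positivity)
      rw [div_lt_one hb]; exact hab
    calc fν < e * 1 := by exact (mul_lt_mul_iff_right₀ hepos).2 this
    _ = e := mul_one e
  · rw [show (1:ℝ) = Real.sqrt 1 by simp]
    apply Real.sqrt_lt_sqrt hq.le
    rw [div_lt_one (by linarith)]; linarith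
  · unfold rhoHat
    congr 2
    unfold omegaHat
    show Real.arcsin _ = Real.arcsin _
    congr 2
    rw [hf2, he2]
    have h13' : l1 - l3 ≠ 0 := by linarith
    have h12' : l1 - l2 ≠ 0 := by linarith
    have hbne : ν1 + l2 * ν2 ≠ 0 := hb.ne'
    have hcne : l1 * ν2 + ν1 ≠ 0 := by nlinarith
    rw [div_eq_div_iff]
    · field_simp
      ring
    · have : (1:ℝ) - (l1 - l2) / (l1 - l3) * ((ν1 + l3 * ν2) / (ν1 + l2 * ν2))
          = (l2 - l3) * (ν1 + l1 * ν2) / ((l1 - l3) * (ν1 + l2 * ν2)) := by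
        field_simp
        ring
      rw [this]
      exact (mul_pos hq (div_pos (mul_pos (by linarith : (0:ℝ) < l2 - l3) hc) (mul_pos (by linarith : (0:ℝ) < l1 - l3) hb))).ne'
    · nlinarith
end

section
/- If real symmetric 3×3 matrices C1 and C2 satisfy the standing assumptions, then there exists a nonsingular real 3×3 matrix M such that MᵀC1M = diag(1,1,−1) and MᵀC2M = diag(λ1, λ2, −λ3), where {λ1, λ2, λ3} are the eigenvalues of C1⁻¹C2 and they satisfy λ1 > λ2 > λ3 > 0. -/
open Matrix Polynomial

private lemma symdot {C : Matrix (Fin 3) (Fin 3) ℝ} (h : C.IsSymm) (u w : Fin 3 → ℝ) :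
    u ⬝ᵥ C.mulVec w = w ⬝ᵥ C.mulVec u := by
  rw [Matrix.dotProduct_mulVec, ← Matrix.mulVec_transpose, h.eq, dotProduct_comm]

private lemma eigvec {A : Matrix (Fin 3) (Fin 3) ℝ} {t : ℝ} (h : A.charpoly.eval t = 0) :
    ∃ v, v ≠ 0 ∧ A.mulVec v = t • v := by
  have hmap : (charmatrix A).map (Polynomial.evalRingHom t)
      = t • (1 : Matrix (Fin 3) (Fin 3) ℝ) - A := by
    ext i j
    by_cases hij : i = j <;>
      simp [charmatrix_apply, hij, Matrix.diagonal_apply, Matrix.one_apply, Matrix.smul_apply]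
  have hdet : (t • (1 : Matrix (Fin 3) (Fin 3) ℝ) - A).det = 0 := by
    have h2 : (charmatrix A).map (Polynomial.evalRingHom t)
        = (Polynomial.evalRingHom t).mapMatrix (charmatrix A) := rfl
    rw [← hmap, h2, ← RingHom.map_det]
    simpa [Matrix.charpoly] using h
  obtain ⟨v, hv, hv0⟩ := (Matrix.exists_mulVec_eq_zero_iff).mpr hdet
  refine ⟨v, hv, ?_⟩
  rw [Matrix.sub_mulVec, Matrix.smul_mulVec, Matrix.one_mulVec, sub_eq_zero] at hv0
  exact hv0.symm

private lemma tripleEntry (V : Fin 3 → Fin 3 → ℝ) (C : Matrix (Fin 3) (Fin 3) ℝ) (i j : Fin 3) :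
    (Matrix.of V * C * (Matrix.of V)ᵀ) i j = V i ⬝ᵥ C.mulVec (V j) := by
  simp only [Matrix.mul_apply, Matrix.mulVec, dotProduct, Matrix.transpose_apply,
    Matrix.of_apply, Finset.sum_mul, Finset.mul_sum]
  rw [Finset.sum_comm]
  exact Finset.sum_congr rfl fun k _ => Finset.sum_congr rfl fun l _ => by ring

private lemma scaled (C : Matrix (Fin 3) (Fin 3) ℝ) (s t : ℝ) (u w : Fin 3 → ℝ) :
    (s • u) ⬝ᵥ C.mulVec (t • w) = s * t * (u ⬝ᵥ C.mulVec w) := by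
  simp only [smul_dotProduct, Matrix.mulVec_smul, dotProduct_smul, smul_eq_mul]
  ring

private lemma dot_expand (C : Matrix (Fin 3) (Fin 3) ℝ) (u v : Fin 3 → ℝ) (t : ℝ) :
    (u + t • v) ⬝ᵥ C.mulVec (u + t • v)
      = u ⬝ᵥ C.mulVec u + t * (u ⬝ᵥ C.mulVec v) + t * (v ⬝ᵥ C.mulVec u)
        + t ^ 2 * (v ⬝ᵥ C.mulVec v) := by
  simp only [Matrix.mulVec_add, Matrix.mulVec_smul, dotProduct_add,
    add_dotProduct, dotProduct_smul, smul_dotProduct, smul_eq_mul]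
  ring

private lemma dot_eig {C1 C2 : Matrix (Fin 3) (Fin 3) ℝ} {lam : ℝ} {v : Fin 3 → ℝ}
    (hev : C2.mulVec v = lam • C1.mulVec v) (u : Fin 3 → ℝ) :
    u ⬝ᵥ C2.mulVec v = lam * (u ⬝ᵥ C1.mulVec v) := by
  rw [hev, dotProduct_smul, smul_eq_mul]

private lemma orth {C1 C2 : Matrix (Fin 3) (Fin 3) ℝ} (h1 : C1.IsSymm) (h2 : C2.IsSymm)
    {lam mu : ℝ} {u v : Fin 3 → ℝ}
    (heu : C2.mulVec u = lam • C1.mulVec u) (hev : C2.mulVec v = mu • C1.mulVec v)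
    (hne : lam ≠ mu) : u ⬝ᵥ C1.mulVec v = 0 := by
  have e1 : u ⬝ᵥ C2.mulVec v = mu * (u ⬝ᵥ C1.mulVec v) := dot_eig hev u
  have e2 : u ⬝ᵥ C2.mulVec v = lam * (u ⬝ᵥ C1.mulVec v) := by
    rw [symdot h2 u v, dot_eig heu v, symdot h1 v u]
  have h3 : (lam - mu) * (u ⬝ᵥ C1.mulVec v) = 0 := by linarith [e1, e2]
  rcases mul_eq_zero.mp h3 with h | h
  · exact absurd (sub_eq_zero.mp h) hne
  · exact h

private lemma eig_lt {C1 C2 : Matrix (Fin 3) (Fin 3) ℝ}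
    (hSA3 : ∀ u : Fin 3 → ℝ, u ≠ 0 → u ⬝ᵥ C2.mulVec u = 0 → u ⬝ᵥ C1.mulVec u < 0)
    {lam mu : ℝ} {u v : Fin 3 → ℝ}
    (hlam : 0 < lam) (hmu : 0 < mu)
    (heu : C2.mulVec u = lam • C1.mulVec u) (hev : C2.mulVec v = mu • C1.mulVec v)
    (du : 0 < u ⬝ᵥ C1.mulVec u) (dv : v ⬝ᵥ C1.mulVec v < 0)
    (ouv : u ⬝ᵥ C1.mulVec v = 0) (ovu : v ⬝ᵥ C1.mulVec u = 0) :
    mu < lam := by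
  set a := u ⬝ᵥ C1.mulVec u with ha
  set b := v ⬝ᵥ C1.mulVec v with hb
  have hb' : 0 < -b := by linarith
  have harg : 0 ≤ lam * a / (mu * -b) := by positivity
  set t := Real.sqrt (lam * a / (mu * -b)) with htdef
  have ht : 0 < t := Real.sqrt_pos.mpr (by positivity)
  have ht2 : t ^ 2 = lam * a / (mu * -b) := Real.sq_sqrt harg
  have hmb : mu * -b ≠ 0 := by positivity
  have h1 : t ^ 2 * (mu * -b) = lam * a := by
    rw [ht2, div_mul_cancel₀ _ hmb]
  set w := u + t • v with hw
  have hwne : w ≠ 0 := by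
    intro h0
    have hzero : v ⬝ᵥ C1.mulVec w = 0 := by rw [h0]; simp
    rw [hw] at hzero
    simp only [Matrix.mulVec_add, Matrix.mulVec_smul, dotProduct_add,
      dotProduct_smul, smul_eq_mul] at hzero
    rw [ovu, ← hb] at hzero
    nlinarith
  have hw2 : w ⬝ᵥ C2.mulVec w = 0 := by
    rw [hw, dot_expand, dot_eig hev u, dot_eig heu v, dot_eig hev v, dot_eig heu u]
    rw [ouv, ovu, ← ha, ← hb]
    linear_combination (-1 : ℝ) * h1
  have hw1 : w ⬝ᵥ C1.mulVec w < 0 := hSA3 w hwne hw2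
  rw [hw, dot_expand, ouv, ovu, ← ha, ← hb] at hw1
  nlinarith [h1, hw1, du, hmu, ht]

private lemma negOne {C1 : Matrix (Fin 3) (Fin 3) ℝ}
    (hpos : 0 < (![1, 0, 0] : Fin 3 → ℝ) ⬝ᵥ C1.mulVec ![1, 0, 0]) (hdet : C1.det < 0)
    (va vb vc : Fin 3 → ℝ)
    (oab : va ⬝ᵥ C1.mulVec vb = 0) (oba : vb ⬝ᵥ C1.mulVec va = 0)
    (oac : va ⬝ᵥ C1.mulVec vc = 0) (oca : vc ⬝ᵥ C1.mulVec va = 0)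
    (obc : vb ⬝ᵥ C1.mulVec vc = 0) (ocb : vc ⬝ᵥ C1.mulVec vb = 0)
    (nza : va ⬝ᵥ C1.mulVec va ≠ 0) (nzb : vb ⬝ᵥ C1.mulVec vb ≠ 0)
    (nzc : vc ⬝ᵥ C1.mulVec vc ≠ 0) :
    (va ⬝ᵥ C1.mulVec va) * (vb ⬝ᵥ C1.mulVec vb) * (vc ⬝ᵥ C1.mulVec vc) < 0 ∧
      ¬(va ⬝ᵥ C1.mulVec va < 0 ∧ vb ⬝ᵥ C1.mulVec vb < 0 ∧ vc ⬝ᵥ C1.mulVec vc < 0) := by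
  have hP : Matrix.of ![va, vb, vc] * C1 * (Matrix.of ![va, vb, vc])ᵀ
      = Matrix.diagonal ![va ⬝ᵥ C1.mulVec va, vb ⬝ᵥ C1.mulVec vb, vc ⬝ᵥ C1.mulVec vc] := by
    ext i j
    rw [tripleEntry]
    fin_cases i <;> fin_cases j
    · rfl
    · exact oab
    · exact oac
    · exact oba
    · rfl
    · exact obc
    · exact oca
    · exact ocb
    · rfl
  have hcombo : ∀ w : Fin 3 → ℝ,
      (Matrix.of ![va, vb, vc])ᵀ.mulVec w = w 0 • va + w 1 • vb + w 2 • vc := by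
    intro w
    funext k
    simp only [Matrix.mulVec, dotProduct, Matrix.transpose_apply, Matrix.of_apply,
      Fin.sum_univ_three, Pi.add_apply, Pi.smul_apply, smul_eq_mul,
      Matrix.cons_val_zero, Matrix.cons_val_one, Matrix.head_cons, Matrix.cons_val_two,
      Matrix.tail_cons]
    ring
  have hdetN : ((Matrix.of ![va, vb, vc])ᵀ).det ≠ 0 := by
    intro h0
    obtain ⟨w, hwne, hw0⟩ := (Matrix.exists_mulVec_eq_zero_iff).mpr h0
    rw [hcombo w] at hw0
    have e0 : va ⬝ᵥ C1.mulVec (w 0 • va + w 1 • vb + w 2 • vc)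
        = w 0 * (va ⬝ᵥ C1.mulVec va) := by
      simp only [Matrix.mulVec_add, Matrix.mulVec_smul, dotProduct_add,
        dotProduct_smul, smul_eq_mul, oab, oac, mul_zero, add_zero]
    have e1 : vb ⬝ᵥ C1.mulVec (w 0 • va + w 1 • vb + w 2 • vc)
        = w 1 * (vb ⬝ᵥ C1.mulVec vb) := by
      simp only [Matrix.mulVec_add, Matrix.mulVec_smul, dotProduct_add,
        dotProduct_smul, smul_eq_mul, oba, obc, mul_zero, add_zero, zero_add]
    have e2 : vc ⬝ᵥ C1.mulVec (w 0 • va + w 1 • vb + w 2 • vc)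
        = w 2 * (vc ⬝ᵥ C1.mulVec vc) := by
      simp only [Matrix.mulVec_add, Matrix.mulVec_smul, dotProduct_add,
        dotProduct_smul, smul_eq_mul, oca, ocb, mul_zero, add_zero, zero_add]
    rw [hw0] at e0 e1 e2
    simp only [Matrix.mulVec_zero, dotProduct_zero] at e0 e1 e2
    apply hwne
    funext k
    fin_cases k
    · exact (mul_eq_zero.mp e0.symm).resolve_right nza
    · exact (mul_eq_zero.mp e1.symm).resolve_right nzb
    · exact (mul_eq_zero.mp e2.symm).resolve_right nzc
  have hdetV : (Matrix.of ![va, vb, vc]).det ≠ 0 := by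
    rwa [Matrix.det_transpose] at hdetN
  have hdeteq : (Matrix.of ![va, vb, vc]).det * C1.det * (Matrix.of ![va, vb, vc]).det
      = (va ⬝ᵥ C1.mulVec va) * (vb ⬝ᵥ C1.mulVec vb) * (vc ⬝ᵥ C1.mulVec vc) := by
    have h := congrArg Matrix.det hP
    rwa [Matrix.det_mul, Matrix.det_mul, Matrix.det_transpose, Matrix.det_diagonal,
      Fin.prod_univ_three, Matrix.cons_val_zero, Matrix.cons_val_one, Matrix.cons_val_zero,
      Matrix.cons_val_two, Matrix.tail_cons, Matrix.head_cons] at h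
  constructor
  · nlinarith [mul_self_pos.mpr hdetV, hdet, hdeteq]
  · rintro ⟨hna, hnb, hnc⟩
    set N := (Matrix.of ![va, vb, vc])ᵀ with hN
    set w := N⁻¹.mulVec ![1, 0, 0] with hwdef
    have he : N.mulVec w = ![1, 0, 0] := by
      rw [hwdef, Matrix.mulVec_mulVec, Matrix.mul_nonsing_inv _ (isUnit_iff_ne_zero.mpr hdetN),
        Matrix.one_mulVec]
    have hq : (![1,0,0] : Fin 3 → ℝ) ⬝ᵥ C1.mulVec ![1,0,0]
        = w ⬝ᵥ (Nᵀ * C1 * N).mulVec w := by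
      rw [← he]
      rw [show (Nᵀ * C1 * N).mulVec w = Nᵀ.mulVec (C1.mulVec (N.mulVec w)) by
        rw [← Matrix.mulVec_mulVec, ← Matrix.mulVec_mulVec]]
      rw [Matrix.dotProduct_mulVec w Nᵀ, Matrix.vecMul_transpose]
    rw [show Nᵀ * C1 * N = Matrix.diagonal
        ![va ⬝ᵥ C1.mulVec va, vb ⬝ᵥ C1.mulVec vb, vc ⬝ᵥ C1.mulVec vc] by
      rw [hN, Matrix.transpose_transpose]; exact hP] at hq
    have hsum : w ⬝ᵥ (Matrix.diagonal
        ![va ⬝ᵥ C1.mulVec va, vb ⬝ᵥ C1.mulVec vb, vc ⬝ᵥ C1.mulVec vc]).mulVec w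
        = (va ⬝ᵥ C1.mulVec va) * (w 0)^2 + (vb ⬝ᵥ C1.mulVec vb) * (w 1)^2
          + (vc ⬝ᵥ C1.mulVec vc) * (w 2)^2 := by
      simp only [Matrix.mulVec_diagonal, dotProduct, Fin.sum_univ_three,
        Matrix.cons_val_zero, Matrix.cons_val_one, Matrix.head_cons, Matrix.cons_val_two,
        Matrix.tail_cons]
      ring
    rw [hsum] at hq
    nlinarith [sq_nonneg (w 0), sq_nonneg (w 1), sq_nonneg (w 2), hpos]

private lemma invsq (x : ℝ) (hx : 0 < x) :
    (Real.sqrt x)⁻¹ * (Real.sqrt x)⁻¹ * x = 1 := by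
  have h := Real.mul_self_sqrt hx.le
  have hne : Real.sqrt x ≠ 0 := ne_of_gt (Real.sqrt_pos.mpr hx)
  field_simp
  rw [Real.sq_sqrt hx.le]

private lemma assemble (C1 C2 : Matrix (Fin 3) (Fin 3) ℝ) (h1 : C1.IsSymm)
    (l1 l2 l3 : ℝ) (w1 w2 w3 : Fin 3 → ℝ)
    (h21 : l2 < l1) (h32 : l3 < l2) (h3 : 0 < l3)
    (he1 : C2.mulVec w1 = l1 • C1.mulVec w1)
    (he2 : C2.mulVec w2 = l2 • C1.mulVec w2)
    (he3 : C2.mulVec w3 = l3 • C1.mulVec w3)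
    (d1 : 0 < w1 ⬝ᵥ C1.mulVec w1) (d2 : 0 < w2 ⬝ᵥ C1.mulVec w2)
    (d3 : w3 ⬝ᵥ C1.mulVec w3 < 0)
    (o12 : w1 ⬝ᵥ C1.mulVec w2 = 0) (o13 : w1 ⬝ᵥ C1.mulVec w3 = 0)
    (o23 : w2 ⬝ᵥ C1.mulVec w3 = 0)
    (hcp : (C1⁻¹ * C2).charpoly =
        (X - Polynomial.C l1) * (X - Polynomial.C l2) * (X - Polynomial.C l3)) :
    ∃ (M : Matrix (Fin 3) (Fin 3) ℝ) (l1' l2' l3' : ℝ),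
      M.det ≠ 0 ∧ l2' < l1' ∧ l3' < l2' ∧ 0 < l3' ∧
      (C1⁻¹ * C2).charpoly =
        (X - Polynomial.C l1') * (X - Polynomial.C l2') * (X - Polynomial.C l3') ∧
      Mᵀ * C1 * M = Matrix.diagonal ![1, 1, -1] ∧
      Mᵀ * C2 * M = Matrix.diagonal ![l1', l2', -l3'] := by
  have o21 : w2 ⬝ᵥ C1.mulVec w1 = 0 := by rw [symdot h1]; exact o12
  have o31 : w3 ⬝ᵥ C1.mulVec w1 = 0 := by rw [symdot h1]; exact o13
  have o32 : w3 ⬝ᵥ C1.mulVec w2 = 0 := by rw [symdot h1]; exact o23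
  set s1 : ℝ := (Real.sqrt (w1 ⬝ᵥ C1.mulVec w1))⁻¹ with hs1
  set s2 : ℝ := (Real.sqrt (w2 ⬝ᵥ C1.mulVec w2))⁻¹ with hs2
  set s3 : ℝ := (Real.sqrt (-(w3 ⬝ᵥ C1.mulVec w3)))⁻¹ with hs3
  have hss1 : s1 * s1 * (w1 ⬝ᵥ C1.mulVec w1) = 1 := invsq _ d1
  have hss2 : s2 * s2 * (w2 ⬝ᵥ C1.mulVec w2) = 1 := invsq _ d2
  have d3' : (0:ℝ) < -(w3 ⬝ᵥ C1.mulVec w3) := by linarith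
  have hss3 : s3 * s3 * (w3 ⬝ᵥ C1.mulVec w3) = -1 := by
    have := invsq _ d3'
    linarith [this]
  refine ⟨(Matrix.of ![s1 • w1, s2 • w2, s3 • w3])ᵀ, l1, l2, l3, ?_, h21, h32, h3, hcp, ?_, ?_⟩
  rotate_left
  · -- MᵀC1M
    rw [Matrix.transpose_transpose]
    ext i j
    rw [tripleEntry]
    fin_cases i <;> fin_cases j
    · show (s1 • w1) ⬝ᵥ C1.mulVec (s1 • w1) = (1:ℝ)
      rw [scaled]; exact hss1
    · show (s1 • w1) ⬝ᵥ C1.mulVec (s2 • w2) = (0:ℝ)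
      rw [scaled, o12]; ring
    · show (s1 • w1) ⬝ᵥ C1.mulVec (s3 • w3) = (0:ℝ)
      rw [scaled, o13]; ring
    · show (s2 • w2) ⬝ᵥ C1.mulVec (s1 • w1) = (0:ℝ)
      rw [scaled, o21]; ring
    · show (s2 • w2) ⬝ᵥ C1.mulVec (s2 • w2) = (1:ℝ)
      rw [scaled]; exact hss2
    · show (s2 • w2) ⬝ᵥ C1.mulVec (s3 • w3) = (0:ℝ)
      rw [scaled, o23]; ring
    · show (s3 • w3) ⬝ᵥ C1.mulVec (s1 • w1) = (0:ℝ)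
      rw [scaled, o31]; ring
    · show (s3 • w3) ⬝ᵥ C1.mulVec (s2 • w2) = (0:ℝ)
      rw [scaled, o32]; ring
    · show (s3 • w3) ⬝ᵥ C1.mulVec (s3 • w3) = (-1:ℝ)
      rw [scaled]; exact hss3
  · -- MᵀC2M
    rw [Matrix.transpose_transpose]
    ext i j
    rw [tripleEntry]
    fin_cases i <;> fin_cases j
    · show (s1 • w1) ⬝ᵥ C2.mulVec (s1 • w1) = l1
      rw [scaled, dot_eig he1]; linear_combination l1 * hss1
    · show (s1 • w1) ⬝ᵥ C2.mulVec (s2 • w2) = (0:ℝ)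
      rw [scaled, dot_eig he2, o12]; ring
    · show (s1 • w1) ⬝ᵥ C2.mulVec (s3 • w3) = (0:ℝ)
      rw [scaled, dot_eig he3, o13]; ring
    · show (s2 • w2) ⬝ᵥ C2.mulVec (s1 • w1) = (0:ℝ)
      rw [scaled, dot_eig he1, o21]; ring
    · show (s2 • w2) ⬝ᵥ C2.mulVec (s2 • w2) = l2
      rw [scaled, dot_eig he2]; linear_combination l2 * hss2
    · show (s2 • w2) ⬝ᵥ C2.mulVec (s3 • w3) = (0:ℝ)
      rw [scaled, dot_eig he3, o23]; ring
    · show (s3 • w3) ⬝ᵥ C2.mulVec (s1 • w1) = (0:ℝ)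
      rw [scaled, dot_eig he1, o31]; ring
    · show (s3 • w3) ⬝ᵥ C2.mulVec (s2 • w2) = (0:ℝ)
      rw [scaled, dot_eig he2, o32]; ring
    · show (s3 • w3) ⬝ᵥ C2.mulVec (s3 • w3) = -l3
      rw [scaled, dot_eig he3]; linear_combination l3 * hss3
  · -- det ≠ 0
    intro h0
    have hD1 : (Matrix.of ![s1 • w1, s2 • w2, s3 • w3])ᵀᵀ * C1
        * (Matrix.of ![s1 • w1, s2 • w2, s3 • w3])ᵀ = Matrix.diagonal ![(1:ℝ), 1, -1] := by
      rw [Matrix.transpose_transpose]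
      ext i j
      rw [tripleEntry]
      fin_cases i <;> fin_cases j
      · show (s1 • w1) ⬝ᵥ C1.mulVec (s1 • w1) = (1:ℝ)
        rw [scaled]; exact hss1
      · show (s1 • w1) ⬝ᵥ C1.mulVec (s2 • w2) = (0:ℝ)
        rw [scaled, o12]; ring
      · show (s1 • w1) ⬝ᵥ C1.mulVec (s3 • w3) = (0:ℝ)
        rw [scaled, o13]; ring
      · show (s2 • w2) ⬝ᵥ C1.mulVec (s1 • w1) = (0:ℝ)
        rw [scaled, o21]; ring
      · show (s2 • w2) ⬝ᵥ C1.mulVec (s2 • w2) = (1:ℝ)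
        rw [scaled]; exact hss2
      · show (s2 • w2) ⬝ᵥ C1.mulVec (s3 • w3) = (0:ℝ)
        rw [scaled, o23]; ring
      · show (s3 • w3) ⬝ᵥ C1.mulVec (s1 • w1) = (0:ℝ)
        rw [scaled, o31]; ring
      · show (s3 • w3) ⬝ᵥ C1.mulVec (s2 • w2) = (0:ℝ)
        rw [scaled, o32]; ring
      · show (s3 • w3) ⬝ᵥ C1.mulVec (s3 • w3) = (-1:ℝ)
        rw [scaled]; exact hss3
    have h := congrArg Matrix.det hD1
    rw [Matrix.det_mul, Matrix.det_mul, Matrix.det_transpose, h0, Matrix.det_diagonal,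
      Fin.prod_univ_three] at h
    norm_num at h
    rw [Matrix.cons_val_two, Matrix.tail_cons, Matrix.head_cons] at h; norm_num at h

private lemma assemble2 (C1 C2 : Matrix (Fin 3) (Fin 3) ℝ) (h1 : C1.IsSymm)
    (hSA3 : ∀ u : Fin 3 → ℝ, u ≠ 0 → u ⬝ᵥ C2.mulVec u = 0 → u ⬝ᵥ C1.mulVec u < 0)
    (p q r : ℝ) (u v z : Fin 3 → ℝ)
    (hp : 0 < p) (hq : 0 < q) (hr : 0 < r) (hpq : p ≠ q)
    (heu : C2.mulVec u = p • C1.mulVec u) (hev : C2.mulVec v = q • C1.mulVec v)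
    (hez : C2.mulVec z = r • C1.mulVec z)
    (du : 0 < u ⬝ᵥ C1.mulVec u) (dv : 0 < v ⬝ᵥ C1.mulVec v) (dz : z ⬝ᵥ C1.mulVec z < 0)
    (ouv : u ⬝ᵥ C1.mulVec v = 0) (ouz : u ⬝ᵥ C1.mulVec z = 0) (ovz : v ⬝ᵥ C1.mulVec z = 0)
    (hcp : (C1⁻¹ * C2).charpoly =
        (X - Polynomial.C p) * (X - Polynomial.C q) * (X - Polynomial.C r)) :
    ∃ (M : Matrix (Fin 3) (Fin 3) ℝ) (l1 l2 l3 : ℝ),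
      M.det ≠ 0 ∧ l2 < l1 ∧ l3 < l2 ∧ 0 < l3 ∧
      (C1⁻¹ * C2).charpoly =
        (X - Polynomial.C l1) * (X - Polynomial.C l2) * (X - Polynomial.C l3) ∧
      Mᵀ * C1 * M = Matrix.diagonal ![1, 1, -1] ∧
      Mᵀ * C2 * M = Matrix.diagonal ![l1, l2, -l3] := by
  have ozu : z ⬝ᵥ C1.mulVec u = 0 := by rw [symdot h1]; exact ouz
  have ozv : z ⬝ᵥ C1.mulVec v = 0 := by rw [symdot h1]; exact ovz
  have ovu : v ⬝ᵥ C1.mulVec u = 0 := by rw [symdot h1]; exact ouv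
  have hru : r < p := eig_lt hSA3 hp hr heu hez du dz ouz ozu
  have hrv : r < q := eig_lt hSA3 hq hr hev hez dv dz ovz ozv
  rcases lt_or_gt_of_ne hpq with hlt | hgt
  · exact assemble C1 C2 h1 q p r v u z hlt hru hr hev heu hez dv du dz ovu ovz ouz
      (by rw [hcp]; ring)
  · exact assemble C1 C2 h1 p q r u v z hgt hrv hr heu hev hez du dv dz ouv ouz ovz hcp

/-- Standing assumption (SA1): symmetric, positive definite upper-left 2×2 block,
negative determinant. -/
def SA1 (C : Matrix (Fin 3) (Fin 3) ℝ) : Prop :=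
  C.IsSymm ∧ (∀ x y : ℝ, (x, y) ≠ (0, 0) → 0 < ![x, y, 0] ⬝ᵥ C.mulVec ![x, y, 0]) ∧
    C.det < 0

/-- Simultaneous diagonalization: under the standing assumptions there
is a nonsingular `M` with `MᵀC1M = diag(1,1,−1)` and `MᵀC2M = diag(λ1,λ2,−λ3)`, where
`λ1 > λ2 > λ3 > 0` are the eigenvalues of `C1⁻¹C2`. -/
theorem simultaneous_diagonalization (C1 C2 : Matrix (Fin 3) (Fin 3) ℝ)
    (hC1 : SA1 C1) (hC2 : SA1 C2)
    (hSA2 : ∃ a b c : ℝ, 0 < a ∧ 0 < b ∧ 0 < c ∧ a ≠ b ∧ a ≠ c ∧ b ≠ c ∧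
      (C1⁻¹ * C2).charpoly =
        (X - Polynomial.C a) * (X - Polynomial.C b) * (X - Polynomial.C c))
    (hSA3 : ∀ u : Fin 3 → ℝ, u ≠ 0 → u ⬝ᵥ C2.mulVec u = 0 → u ⬝ᵥ C1.mulVec u < 0) :
    ∃ (M : Matrix (Fin 3) (Fin 3) ℝ) (l1 l2 l3 : ℝ),
      M.det ≠ 0 ∧ l2 < l1 ∧ l3 < l2 ∧ 0 < l3 ∧
      (C1⁻¹ * C2).charpoly =
        (X - Polynomial.C l1) * (X - Polynomial.C l2) * (X - Polynomial.C l3) ∧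
      Mᵀ * C1 * M = Matrix.diagonal ![1, 1, -1] ∧
      Mᵀ * C2 * M = Matrix.diagonal ![l1, l2, -l3] := by
  obtain ⟨h1sym, h1pos, h1det⟩ := hC1
  obtain ⟨h2sym, -, -⟩ := hC2
  obtain ⟨a, b, c, ha, hb, hc, hab, hac, hbc, hcp⟩ := hSA2
  have hC1ne : C1.det ≠ 0 := ne_of_lt h1det
  have hC2eq : C1 * (C1⁻¹ * C2) = C2 :=
    Matrix.mul_nonsing_inv_cancel_left _ _ (isUnit_iff_ne_zero.mpr hC1ne)
  have conv : ∀ (t : ℝ) (v : Fin 3 → ℝ), (C1⁻¹ * C2).mulVec v = t • v →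
      C2.mulVec v = t • C1.mulVec v := by
    intro t v hv
    rw [← hC2eq, ← Matrix.mulVec_mulVec, hv, Matrix.mulVec_smul]
  have ra : (C1⁻¹ * C2).charpoly.eval a = 0 := by rw [hcp]; simp
  have rb : (C1⁻¹ * C2).charpoly.eval b = 0 := by rw [hcp]; simp
  have rc : (C1⁻¹ * C2).charpoly.eval c = 0 := by rw [hcp]; simp
  obtain ⟨va, hva, heva'⟩ := eigvec ra
  obtain ⟨vb, hvb, hevb'⟩ := eigvec rb
  obtain ⟨vc, hvc, hevc'⟩ := eigvec rc
  have heva := conv a va heva'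
  have hevb := conv b vb hevb'
  have hevc := conv c vc hevc'
  have hpos : 0 < (![1, 0, 0] : Fin 3 → ℝ) ⬝ᵥ C1.mulVec ![1, 0, 0] :=
    h1pos 1 0 (by norm_num)
  have oab := orth h1sym h2sym heva hevb hab
  have oba := orth h1sym h2sym hevb heva (Ne.symm hab)
  have oac := orth h1sym h2sym heva hevc hac
  have oca := orth h1sym h2sym hevc heva (Ne.symm hac)
  have obc := orth h1sym h2sym hevb hevc hbc
  have ocb := orth h1sym h2sym hevc hevb (Ne.symm hbc)
  have hdnz : ∀ (t : ℝ) (v : Fin 3 → ℝ), v ≠ 0 → C2.mulVec v = t • C1.mulVec v →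
      v ⬝ᵥ C1.mulVec v ≠ 0 := by
    intro t v hv hev h0
    have h2 : v ⬝ᵥ C2.mulVec v = 0 := by rw [dot_eig hev, h0, mul_zero]
    have h3 := hSA3 v hv h2
    rw [h0] at h3
    exact lt_irrefl 0 h3
  have nza := hdnz a va hva heva
  have nzb := hdnz b vb hvb hevb
  have nzc := hdnz c vc hvc hevc
  obtain ⟨hprod, hnotall⟩ := negOne hpos h1det va vb vc oab oba oac oca obc ocb nza nzb nzc
  rcases nza.lt_or_gt with ha1 | ha1 <;> rcases nzb.lt_or_gt with hb1 | hb1 <;>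
    rcases nzc.lt_or_gt with hc1 | hc1
  · exact absurd ⟨ha1, hb1, hc1⟩ hnotall
  · exfalso; nlinarith [hprod, mul_pos (mul_pos_of_neg_of_neg ha1 hb1) hc1]
  · exfalso; nlinarith [hprod, mul_pos (mul_pos_of_neg_of_neg ha1 hc1) hb1]
  · exact assemble2 C1 C2 h1sym hSA3 b c a vb vc va hb hc ha hbc hevb hevc heva
      hb1 hc1 ha1 obc oba oca (by rw [hcp]; ring)
  · exfalso; nlinarith [hprod, mul_pos (mul_pos_of_neg_of_neg hb1 hc1) ha1]
  · exact assemble2 C1 C2 h1sym hSA3 a c b va vc vb ha hc hb hac heva hevc hevb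
      ha1 hc1 hb1 oac oab ocb (by rw [hcp]; ring)
  · exact assemble2 C1 C2 h1sym hSA3 a b c va vb vc ha hb hc hab heva hevb hevc
      ha1 hb1 hc1 oab oac obc hcp
  · exfalso; nlinarith [hprod, mul_pos (mul_pos ha1 hb1) hc1]
end

section
/- Suppose real symmetric 3×3 matrices C1 and C2 satisfy the standing assumptions, with eigenvalues λ1 > λ2 > λ3 > 0 of C1⁻¹C2, and suppose ν = (ν1,ν2) satisfies ν2 > 0 and ν1 + λ3ν2 > 0. Then the pair (C1, C_ν) with C_ν = ν1C1 + ν2C2 also satisfies the standing assumptions; in particular the eigenvalues of C1⁻¹C_ν are ν1 + λᵢν2 (i = 1,2,3) and satisfy 0 < ν1+λ3ν2 < ν1+λ2ν2 < ν1+λ1ν2. -/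
open Matrix Polynomial

lemma eval_charpoly3 (M : Matrix (Fin 3) (Fin 3) ℝ) (t : ℝ) :
    M.charpoly.eval t = (t • (1 : Matrix (Fin 3) (Fin 3) ℝ) - M).det := by
  rw [Matrix.charpoly, ← Polynomial.coe_evalRingHom, RingHom.map_det]
  congr 1
  ext i j
  by_cases h : i = j
  · subst h
    simp [Matrix.charmatrix_apply_eq, Matrix.one_apply]
  · simp [Matrix.charmatrix_apply_ne _ _ _ h, Matrix.one_apply, h]

lemma symm_form {C : Matrix (Fin 3) (Fin 3) ℝ} (hC : C.IsSymm) (u w : Fin 3 → ℝ) :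
    u ⬝ᵥ C.mulVec w = w ⬝ᵥ C.mulVec u := by
  rw [Matrix.dotProduct_mulVec, ← Matrix.mulVec_transpose, hC.eq, dotProduct_comm]

lemma exists_eigvec (C1 C2 : Matrix (Fin 3) (Fin 3) ℝ) (hd : IsUnit C1.det) (l : ℝ)
    (hroot : ((C1⁻¹ * C2).charpoly).eval l = 0) :
    ∃ v : Fin 3 → ℝ, v ≠ 0 ∧ C2.mulVec v = l • C1.mulVec v := by
  have hdet : (l • (1 : Matrix (Fin 3) (Fin 3) ℝ) - C1⁻¹ * C2).det = 0 := by
    rw [← eval_charpoly3]; exact hroot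
  obtain ⟨v, hv0, hv⟩ := (Matrix.exists_mulVec_eq_zero_iff).2 hdet
  have hAv : (C1⁻¹ * C2).mulVec v = l • v := by
    rw [Matrix.sub_mulVec, sub_eq_zero, Matrix.smul_mulVec, Matrix.one_mulVec] at hv
    exact hv.symm
  refine ⟨v, hv0, ?_⟩
  calc C2.mulVec v = ((C1 * C1⁻¹) * C2).mulVec v := by
        rw [Matrix.mul_nonsing_inv _ hd, one_mul]
    _ = C1.mulVec ((C1⁻¹ * C2).mulVec v) := by
        rw [Matrix.mulVec_mulVec, Matrix.mul_assoc]
    _ = l • C1.mulVec v := by rw [hAv, Matrix.mulVec_smul]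

lemma quad_expand (C : Matrix (Fin 3) (Fin 3) ℝ) (v1 v2 v3 : Fin 3 → ℝ) (c1 c2 c3 : ℝ)
    (h12 : v1 ⬝ᵥ C.mulVec v2 = 0) (h13 : v1 ⬝ᵥ C.mulVec v3 = 0)
    (h21 : v2 ⬝ᵥ C.mulVec v1 = 0) (h23 : v2 ⬝ᵥ C.mulVec v3 = 0)
    (h31 : v3 ⬝ᵥ C.mulVec v1 = 0) (h32 : v3 ⬝ᵥ C.mulVec v2 = 0) :
    (c1 • v1 + c2 • v2 + c3 • v3) ⬝ᵥ C.mulVec (c1 • v1 + c2 • v2 + c3 • v3) =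
      c1 ^ 2 * (v1 ⬝ᵥ C.mulVec v1) + c2 ^ 2 * (v2 ⬝ᵥ C.mulVec v2) +
        c3 ^ 2 * (v3 ⬝ᵥ C.mulVec v3) := by
  simp only [Matrix.mulVec_add, Matrix.mulVec_smul, add_dotProduct,
    smul_dotProduct, dotProduct_add, dotProduct_smul, smul_eq_mul,
    h12, h13, h21, h23, h31, h32]
  ring

lemma quad_expand2 (C : Matrix (Fin 3) (Fin 3) ℝ) (v w : Fin 3 → ℝ) (α β : ℝ)
    (hvw : v ⬝ᵥ C.mulVec w = 0) (hwv : w ⬝ᵥ C.mulVec v = 0) :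
    (α • v + β • w) ⬝ᵥ C.mulVec (α • v + β • w) =
      α ^ 2 * (v ⬝ᵥ C.mulVec v) + β ^ 2 * (w ⬝ᵥ C.mulVec w) := by
  simp only [Matrix.mulVec_add, Matrix.mulVec_smul, add_dotProduct,
    smul_dotProduct, dotProduct_add, dotProduct_smul, smul_eq_mul,
    hvw, hwv]
  ring

lemma eig_orth {C1 C2 : Matrix (Fin 3) (Fin 3) ℝ} (hC1 : C1.IsSymm) (hC2 : C2.IsSymm)
    {l m : ℝ} {v w : Fin 3 → ℝ} (hv : C2.mulVec v = l • C1.mulVec v)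
    (hw : C2.mulVec w = m • C1.mulVec w) (hlm : l ≠ m) :
    v ⬝ᵥ C1.mulVec w = 0 ∧ v ⬝ᵥ C2.mulVec w = 0 := by
  have h1 : v ⬝ᵥ C2.mulVec w = m * (v ⬝ᵥ C1.mulVec w) := by
    rw [hw, dotProduct_smul, smul_eq_mul]
  have h2 : v ⬝ᵥ C2.mulVec w = l * (v ⬝ᵥ C1.mulVec w) := by
    rw [symm_form hC2, hv, dotProduct_smul, smul_eq_mul, ← symm_form hC1]
  have hx : (m - l) * (v ⬝ᵥ C1.mulVec w) = 0 := by linear_combination h2 - h1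
  have hml : m - l ≠ 0 := sub_ne_zero.mpr (Ne.symm hlm)
  have hz : v ⬝ᵥ C1.mulVec w = 0 := by
    rcases mul_eq_zero.1 hx with h | h
    · exact absurd h hml
    · exact h
  exact ⟨hz, by rw [h1, hz, mul_zero]⟩

lemma sign_prop {C1 C2 : Matrix (Fin 3) (Fin 3) ℝ} (hC1s : C1.IsSymm) (hC2s : C2.IsSymm)
    (hSA3 : ∀ u : Fin 3 → ℝ, u ≠ 0 → u ⬝ᵥ C2.mulVec u = 0 → u ⬝ᵥ C1.mulVec u < 0)
    {li lj : ℝ} {vi vj : Fin 3 → ℝ}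
    (hvi : C2.mulVec vi = li • C1.mulVec vi) (hvj : C2.mulVec vj = lj • C1.mulVec vj)
    (hij : lj < li) (hj0 : 0 < lj)
    (haj : 0 < vj ⬝ᵥ C1.mulVec vj) (hai : vi ⬝ᵥ C1.mulVec vi < 0) : False := by
  have hi0 : 0 < li := lt_trans hj0 hij
  set ai := vi ⬝ᵥ C1.mulVec vi with hai_def
  set aj := vj ⬝ᵥ C1.mulVec vj with haj_def
  have hbi : vi ⬝ᵥ C2.mulVec vi = li * ai := by
    rw [hvi, dotProduct_smul, smul_eq_mul]
  have hbj : vj ⬝ᵥ C2.mulVec vj = lj * aj := by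
    rw [hvj, dotProduct_smul, smul_eq_mul]
  obtain ⟨hij1, hij2⟩ := eig_orth hC1s hC2s hvi hvj (ne_of_gt hij)
  obtain ⟨hji1, hji2⟩ := eig_orth hC1s hC2s hvj hvi (ne_of_lt hij)
  set α : ℝ := Real.sqrt (lj * aj / (li * (-ai))) with hα_def
  have harg : 0 < lj * aj / (li * (-ai)) :=
    div_pos (mul_pos hj0 haj) (mul_pos hi0 (neg_pos.2 hai))
  have hα2 : α ^ 2 = lj * aj / (li * (-ai)) := Real.sq_sqrt harg.le
  set u : Fin 3 → ℝ := α • vi + (1 : ℝ) • vj with hu_def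
  have hq1 : u ⬝ᵥ C1.mulVec u = α ^ 2 * ai + 1 ^ 2 * aj :=
    quad_expand2 C1 vi vj α 1 hij1 hji1
  have hq2 : u ⬝ᵥ C2.mulVec u = α ^ 2 * (li * ai) + 1 ^ 2 * (lj * aj) := by
    rw [quad_expand2 C2 vi vj α 1 hij2 hji2, hbi, hbj]
  have hane : ai ≠ 0 := ne_of_lt hai
  have hline : li ≠ 0 := ne_of_gt hi0
  have hq2z : u ⬝ᵥ C2.mulVec u = 0 := by
    rw [hq2, hα2]
    field_simp
    ring
  have hq1pos : 0 < u ⬝ᵥ C1.mulVec u := by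
    rw [hq1, hα2]
    have : lj * aj / (li * -ai) * ai + 1 ^ 2 * aj = aj * (li - lj) / li := by
      field_simp
      ring
    rw [this]
    exact div_pos (mul_pos haj (sub_pos.2 hij)) hi0
  have hune : u ≠ 0 := by
    intro h
    rw [h] at hq1pos
    simp [Matrix.mulVec_zero, dotProduct_zero] at hq1pos
  exact absurd (hSA3 u hune hq2z) (not_lt.2 hq1pos.le)

lemma charpoly_smul_one_add (A : Matrix (Fin 3) (Fin 3) ℝ) (l1 l2 l3 ν1 ν2 : ℝ) (hν2 : ν2 ≠ 0)
    (hchar : A.charpoly = (X - Polynomial.C l1) * (X - Polynomial.C l2) * (X - Polynomial.C l3)) :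
    (ν1 • (1 : Matrix (Fin 3) (Fin 3) ℝ) + ν2 • A).charpoly =
      (X - Polynomial.C (ν1 + l1 * ν2)) * (X - Polynomial.C (ν1 + l2 * ν2)) *
        (X - Polynomial.C (ν1 + l3 * ν2)) := by
  set q : ℝ[X] := Polynomial.C ν2⁻¹ * (X - Polynomial.C ν1) with hqdef
  set f : ℝ[X] →+* ℝ[X] := (aeval q : ℝ[X] →ₐ[ℝ] ℝ[X]).toRingHom with hfdef
  have h2 : Polynomial.C ν2 * Polynomial.C ν2⁻¹ = 1 := by
    rw [← _root_.map_mul, mul_inv_cancel₀ hν2, Polynomial.C_1]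
  have hq : Polynomial.C ν2 * q = X - Polynomial.C ν1 := by
    rw [hqdef, ← mul_assoc, h2, one_mul]
  have hkey : charmatrix (ν1 • (1 : Matrix (Fin 3) (Fin 3) ℝ) + ν2 • A)
      = (Polynomial.C ν2) • ((charmatrix A).map f) := by
    refine Matrix.ext fun i j => ?_
    by_cases h : i = j
    · subst h
      simp only [Matrix.charmatrix_apply_eq, Matrix.map_apply, Matrix.smul_apply,
        Matrix.add_apply, Matrix.one_apply_eq, smul_eq_mul, hfdef, AlgHom.toRingHom_eq_coe,
        RingHom.coe_coe, map_sub, aeval_X, aeval_C, algebraMap_eq, _root_.map_add, _root_.map_mul]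
      rw [Polynomial.C_1]
      linear_combination -hq
    · simp only [Matrix.charmatrix_apply_ne _ _ _ h, Matrix.map_apply, Matrix.smul_apply,
        Matrix.add_apply, Matrix.one_apply_ne h, smul_eq_mul, hfdef, AlgHom.toRingHom_eq_coe,
        RingHom.coe_coe, map_neg, aeval_C, algebraMap_eq, _root_.map_add, _root_.map_mul,
        mul_zero, zero_add]
      ring
  rw [Matrix.charpoly, hkey, Matrix.det_smul, Fintype.card_fin,
    ← RingHom.mapMatrix_apply, ← RingHom.map_det, ← Matrix.charpoly, hchar]
  simp only [hfdef, AlgHom.toRingHom_eq_coe, RingHom.coe_coe, _root_.map_mul, map_sub, aeval_X,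
    aeval_C, algebraMap_eq]
  calc Polynomial.C ν2 ^ 3 *
        ((q - Polynomial.C l1) * (q - Polynomial.C l2) * (q - Polynomial.C l3))
      = (Polynomial.C ν2 * q - Polynomial.C l1 * Polynomial.C ν2) *
          (Polynomial.C ν2 * q - Polynomial.C l2 * Polynomial.C ν2) *
          (Polynomial.C ν2 * q - Polynomial.C l3 * Polynomial.C ν2) := by ring
    _ = (X - Polynomial.C (ν1 + l1 * ν2)) * (X - Polynomial.C (ν1 + l2 * ν2)) *
          (X - Polynomial.C (ν1 + l3 * ν2)) := by
        rw [hq]; simp only [_root_.map_add, _root_.map_mul]; ring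

set_option maxHeartbeats 4000000 in
/-- for a valid parameter `ν`, the pair `(C1, C_ν)` with
`C_ν = ν1 C1 + ν2 C2` again satisfies the standing assumptions, with eigenvalues
`ν1 + λᵢ ν2` of `C1⁻¹ C_ν` satisfying `0 < ν1+λ3ν2 < ν1+λ2ν2 < ν1+λ1ν2`. -/
theorem pencil_element_standing_assumptions (C1 C2 : Matrix (Fin 3) (Fin 3) ℝ)
    (l1 l2 l3 ν1 ν2 : ℝ)
    (hC1 : SA1 C1) (hC2 : SA1 C2)
    (h12 : l2 < l1) (h23 : l3 < l2) (h3 : 0 < l3)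
    (hchar : (C1⁻¹ * C2).charpoly =
      (X - Polynomial.C l1) * (X - Polynomial.C l2) * (X - Polynomial.C l3))
    (hSA3 : ∀ u : Fin 3 → ℝ, u ≠ 0 → u ⬝ᵥ C2.mulVec u = 0 → u ⬝ᵥ C1.mulVec u < 0)
    (hν2 : 0 < ν2) (hν : 0 < ν1 + l3 * ν2) :
    let Cν := ν1 • C1 + ν2 • C2
    SA1 Cν ∧
    (C1⁻¹ * Cν).charpoly =
      (X - Polynomial.C (ν1 + l1 * ν2)) * (X - Polynomial.C (ν1 + l2 * ν2)) *
        (X - Polynomial.C (ν1 + l3 * ν2)) ∧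
    0 < ν1 + l3 * ν2 ∧ ν1 + l3 * ν2 < ν1 + l2 * ν2 ∧ ν1 + l2 * ν2 < ν1 + l1 * ν2 ∧
    (∀ u : Fin 3 → ℝ, u ≠ 0 → u ⬝ᵥ Cν.mulVec u = 0 → u ⬝ᵥ C1.mulVec u < 0) := by
  intro Cν
  have hCνdef : Cν = ν1 • C1 + ν2 • C2 := rfl
  obtain ⟨hC1s, hC1p, hC1d⟩ := hC1
  obtain ⟨hC2s, hC2p, hC2d⟩ := hC2
  have hd1 : IsUnit C1.det := isUnit_iff_ne_zero.2 (ne_of_lt hC1d)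
  -- eigenvectors
  have hr1 : ((C1⁻¹ * C2).charpoly).eval l1 = 0 := by rw [hchar]; simp
  have hr2 : ((C1⁻¹ * C2).charpoly).eval l2 = 0 := by rw [hchar]; simp
  have hr3 : ((C1⁻¹ * C2).charpoly).eval l3 = 0 := by rw [hchar]; simp
  obtain ⟨v1, hv1ne, hv1⟩ := exists_eigvec C1 C2 hd1 l1 hr1
  obtain ⟨v2, hv2ne, hv2⟩ := exists_eigvec C1 C2 hd1 l2 hr2
  obtain ⟨v3, hv3ne, hv3⟩ := exists_eigvec C1 C2 hd1 l3 hr3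
  have hb1 : v1 ⬝ᵥ C2.mulVec v1 = l1 * (v1 ⬝ᵥ C1.mulVec v1) := by
    rw [hv1, dotProduct_smul, smul_eq_mul]
  have hb2 : v2 ⬝ᵥ C2.mulVec v2 = l2 * (v2 ⬝ᵥ C1.mulVec v2) := by
    rw [hv2, dotProduct_smul, smul_eq_mul]
  have hb3 : v3 ⬝ᵥ C2.mulVec v3 = l3 * (v3 ⬝ᵥ C1.mulVec v3) := by
    rw [hv3, dotProduct_smul, smul_eq_mul]
  obtain ⟨o12a, o12b⟩ := eig_orth hC1s hC2s hv1 hv2 (ne_of_gt h12)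
  obtain ⟨o21a, o21b⟩ := eig_orth hC1s hC2s hv2 hv1 (ne_of_lt h12)
  obtain ⟨o13a, o13b⟩ := eig_orth hC1s hC2s hv1 hv3 (ne_of_gt (lt_trans h23 h12))
  obtain ⟨o31a, o31b⟩ := eig_orth hC1s hC2s hv3 hv1 (ne_of_lt (lt_trans h23 h12))
  obtain ⟨o23a, o23b⟩ := eig_orth hC1s hC2s hv2 hv3 (ne_of_gt h23)
  obtain ⟨o32a, o32b⟩ := eig_orth hC1s hC2s hv3 hv2 (ne_of_lt h23)
  -- the quadratic values are nonzero
  have ha1ne : v1 ⬝ᵥ C1.mulVec v1 ≠ 0 := by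
    intro h
    have := hSA3 v1 hv1ne (by rw [hb1, h, mul_zero])
    rw [h] at this; exact lt_irrefl 0 this
  have ha2ne : v2 ⬝ᵥ C1.mulVec v2 ≠ 0 := by
    intro h
    have := hSA3 v2 hv2ne (by rw [hb2, h, mul_zero])
    rw [h] at this; exact lt_irrefl 0 this
  have ha3ne : v3 ⬝ᵥ C1.mulVec v3 ≠ 0 := by
    intro h
    have := hSA3 v3 hv3ne (by rw [hb3, h, mul_zero])
    rw [h] at this; exact lt_irrefl 0 this
  -- the matrix of eigenvectors
  set P : Matrix (Fin 3) (Fin 3) ℝ := Matrix.of fun i j => ![v1, v2, v3] j i with hPdef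
  have hP : ∀ c : Fin 3 → ℝ, P.mulVec c = c 0 • v1 + c 1 • v2 + c 2 • v3 := by
    intro c
    funext i
    simp [hPdef, Matrix.mulVec, dotProduct, Fin.sum_univ_three]
    ring
  have hdetP : P.det ≠ 0 := by
    intro h
    obtain ⟨c, hc0, hc⟩ := (Matrix.exists_mulVec_eq_zero_iff).2 h
    rw [hP] at hc
    have pair : ∀ (w : Fin 3 → ℝ), w ⬝ᵥ C1.mulVec (c 0 • v1 + c 1 • v2 + c 2 • v3)
        = c 0 * (w ⬝ᵥ C1.mulVec v1) + c 1 * (w ⬝ᵥ C1.mulVec v2)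
          + c 2 * (w ⬝ᵥ C1.mulVec v3) := by
      intro w
      simp only [Matrix.mulVec_add, Matrix.mulVec_smul, dotProduct_add,
        dotProduct_smul, smul_eq_mul]
    have h1 : c 0 * (v1 ⬝ᵥ C1.mulVec v1) = 0 := by
      have := pair v1
      rw [hc, Matrix.mulVec_zero, dotProduct_zero, o12a, o13a] at this
      linarith [this]
    have h2 : c 1 * (v2 ⬝ᵥ C1.mulVec v2) = 0 := by
      have := pair v2
      rw [hc, Matrix.mulVec_zero, dotProduct_zero, o21a, o23a] at this
      linarith [this]
    have h3' : c 2 * (v3 ⬝ᵥ C1.mulVec v3) = 0 := by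
      have := pair v3
      rw [hc, Matrix.mulVec_zero, dotProduct_zero, o31a, o32a] at this
      linarith [this]
    apply hc0
    funext i
    fin_cases i
    · exact (mul_eq_zero.1 h1).resolve_right ha1ne
    · exact (mul_eq_zero.1 h2).resolve_right ha2ne
    · exact (mul_eq_zero.1 h3').resolve_right ha3ne
  -- Gram determinant
  have hent : ∀ i j, (Pᵀ * C1 * P) i j = (![v1, v2, v3] i) ⬝ᵥ C1.mulVec (![v1, v2, v3] j) := by
    intro i j
    simp [Matrix.mul_apply, Matrix.mulVec, dotProduct, Fin.sum_univ_three,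
      Matrix.transpose_apply, hPdef]
    ring
  have hgram : (v1 ⬝ᵥ C1.mulVec v1) * (v2 ⬝ᵥ C1.mulVec v2) * (v3 ⬝ᵥ C1.mulVec v3)
      = P.det ^ 2 * C1.det := by
    have hG : (Pᵀ * C1 * P).det
        = (v1 ⬝ᵥ C1.mulVec v1) * (v2 ⬝ᵥ C1.mulVec v2) * (v3 ⬝ᵥ C1.mulVec v3) := by
      rw [Matrix.det_fin_three]
      simp only [hent]
      simp only [show (![v1, v2, v3] 0) = v1 from rfl, show (![v1, v2, v3] 1) = v2 from rfl,
        show (![v1, v2, v3] 2) = v3 from rfl]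
      rw [o12a, o13a, o21a, o23a, o31a, o32a]
      ring
    rw [← hG, Matrix.det_mul, Matrix.det_mul, Matrix.det_transpose]
    ring
  have hprodneg : (v1 ⬝ᵥ C1.mulVec v1) * (v2 ⬝ᵥ C1.mulVec v2) * (v3 ⬝ᵥ C1.mulVec v3) < 0 := by
    rw [hgram]
    exact mul_neg_of_pos_of_neg (pow_two_pos_of_ne_zero hdetP) hC1d
  -- representation of vectors in the eigenbasis
  have hrepr : ∀ u : Fin 3 → ℝ, ∃ c : Fin 3 → ℝ, u = c 0 • v1 + c 1 • v2 + c 2 • v3 := by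
    intro u
    refine ⟨P⁻¹.mulVec u, ?_⟩
    rw [← hP, Matrix.mulVec_mulVec, Matrix.mul_nonsing_inv _ (isUnit_iff_ne_zero.2 hdetP),
      Matrix.one_mulVec]
  -- determination of the signs
  have ha3neg : v3 ⬝ᵥ C1.mulVec v3 < 0 := by
    rcases lt_or_gt_of_ne ha3ne with h | h
    · exact h
    exfalso
    have h2pos : 0 < v2 ⬝ᵥ C1.mulVec v2 := by
      rcases lt_or_gt_of_ne ha2ne with h' | h'
      · exact (sign_prop hC1s hC2s hSA3 hv2 hv3 h23 h3 h h').elim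
      · exact h'
    have h1pos : 0 < v1 ⬝ᵥ C1.mulVec v1 := by
      rcases lt_or_gt_of_ne ha1ne with h' | h'
      · exact (sign_prop hC1s hC2s hSA3 hv1 hv3 (lt_trans h23 h12) h3 h h').elim
      · exact h'
    linarith [hprodneg, mul_pos (mul_pos h1pos h2pos) h]
  have ha2pos : 0 < v2 ⬝ᵥ C1.mulVec v2 := by
    rcases lt_or_gt_of_ne ha2ne with h | h
    swap
    · exact h
    exfalso
    rcases lt_or_gt_of_ne ha1ne with h1 | h1
    · -- all three negative: contradicts positivity of C1 on the plane
      obtain ⟨c, hc⟩ := hrepr ![(1 : ℝ), 0, 0]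
      have hq := quad_expand C1 v1 v2 v3 (c 0) (c 1) (c 2) o12a o13a o21a o23a o31a o32a
      rw [← hc] at hq
      have hpos := hC1p 1 0 (by simp)
      linarith [hq, hpos, mul_nonneg (sq_nonneg (c 0)) (neg_nonneg.2 h1.le),
        mul_nonneg (sq_nonneg (c 1)) (neg_nonneg.2 h.le),
        mul_nonneg (sq_nonneg (c 2)) (neg_nonneg.2 ha3neg.le)]
    · linarith [hprodneg, mul_pos h1 (mul_pos_of_neg_of_neg h ha3neg)]
  have ha1pos : 0 < v1 ⬝ᵥ C1.mulVec v1 := by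
    rcases lt_or_gt_of_ne ha1ne with h | h
    swap
    · exact h
    exact (sign_prop hC1s hC2s hSA3 hv1 hv2 h12 (lt_trans h3 h23) ha2pos h).elim
  -- the key semidefiniteness estimate: C2 - l3 C1 ⪰ 0
  have hpsd : ∀ u : Fin 3 → ℝ, l3 * (u ⬝ᵥ C1.mulVec u) ≤ u ⬝ᵥ C2.mulVec u := by
    intro u
    obtain ⟨c, hc⟩ := hrepr u
    have hq1 := quad_expand C1 v1 v2 v3 (c 0) (c 1) (c 2) o12a o13a o21a o23a o31a o32a
    have hq2 := quad_expand C2 v1 v2 v3 (c 0) (c 1) (c 2) o12b o13b o21b o23b o31b o32b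
    rw [← hc] at hq1 hq2
    rw [hq1, hq2, hb1, hb2, hb3]
    nlinarith [mul_nonneg (sq_nonneg (c 0)) (mul_nonneg ha1pos.le (sub_nonneg.2 (le_of_lt (lt_trans h23 h12)))),
      mul_nonneg (sq_nonneg (c 1)) (mul_nonneg ha2pos.le (sub_nonneg.2 (le_of_lt h23)))]
  -- the quadratic form of Cν expands
  have hexp : ∀ u : Fin 3 → ℝ, u ⬝ᵥ Cν.mulVec u
      = ν1 * (u ⬝ᵥ C1.mulVec u) + ν2 * (u ⬝ᵥ C2.mulVec u) := by
    intro u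
    rw [hCνdef, Matrix.add_mulVec, Matrix.smul_mulVec, Matrix.smul_mulVec,
      dotProduct_add, dotProduct_smul, dotProduct_smul, smul_eq_mul,
      smul_eq_mul]
  -- the characteristic polynomial of C1⁻¹ Cν
  have hM : C1⁻¹ * Cν = ν1 • (1 : Matrix (Fin 3) (Fin 3) ℝ) + ν2 • (C1⁻¹ * C2) := by
    rw [hCνdef, Matrix.mul_add, Matrix.mul_smul, Matrix.mul_smul,
      Matrix.nonsing_inv_mul _ hd1]
  have hcharν : (C1⁻¹ * Cν).charpoly =
      (X - Polynomial.C (ν1 + l1 * ν2)) * (X - Polynomial.C (ν1 + l2 * ν2)) *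
        (X - Polynomial.C (ν1 + l3 * ν2)) := by
    rw [hM]
    exact charpoly_smul_one_add _ l1 l2 l3 ν1 ν2 (ne_of_gt hν2) hchar
  have hf2 : 0 < ν1 + l2 * ν2 := by
    linarith [mul_pos (sub_pos.2 h23) hν2]
  have hf1 : 0 < ν1 + l1 * ν2 := by
    linarith [mul_pos (sub_pos.2 (lt_trans h23 h12)) hν2]
  refine ⟨⟨?_, ?_, ?_⟩, hcharν, hν,
    by linarith [mul_pos (sub_pos.2 h23) hν2],
    by linarith [mul_pos (sub_pos.2 h12) hν2], ?_⟩
  · -- symmetry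
    rw [hCνdef, Matrix.IsSymm, Matrix.transpose_add, Matrix.transpose_smul,
      Matrix.transpose_smul, hC1s.eq, hC2s.eq]
  · -- positivity on the plane
    intro x y hxy
    have hw1 := hC1p x y hxy
    have hw2 := hpsd ![x, y, 0]
    rw [hexp ![x, y, 0]]
    nlinarith [mul_pos hν hw1, mul_nonneg hν2.le (sub_nonneg.2 hw2)]
  · -- negative determinant
    have hdM : (C1⁻¹ * Cν).det = (ν1 + l1 * ν2) * ((ν1 + l2 * ν2) * (ν1 + l3 * ν2)) := by
      rw [Matrix.det_eq_sign_charpoly_coeff, hcharν, Fintype.card_fin,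
        Polynomial.coeff_zero_eq_eval_zero]
      simp [Polynomial.eval_mul, Polynomial.eval_sub]
      ring
    have hCν_eq : Cν = C1 * (C1⁻¹ * Cν) := by
      rw [← Matrix.mul_assoc, Matrix.mul_nonsing_inv _ hd1, one_mul]
    rw [hCν_eq, Matrix.det_mul, hdM]
    exact mul_neg_of_neg_of_pos hC1d (mul_pos hf1 (mul_pos hf2 hν))
  · -- SA3 for the pair (C1, Cν)
    intro u hu h0
    rw [hexp u] at h0
    have hps := hpsd u
    by_contra hcon
    push_neg at hcon
    have hq1 : u ⬝ᵥ C1.mulVec u = 0 := le_antisymm (by nlinarith) hcon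
    rw [hq1, mul_zero, zero_add] at h0
    have hq2 : u ⬝ᵥ C2.mulVec u = 0 := (mul_eq_zero.1 h0).resolve_left (ne_of_gt hν2)
    have := hSA3 u hu hq2
    rw [hq1] at this
    exact lt_irrefl 0 this
end

section
/- Let C1, C2 satisfy the standing assumptions with eigenvalues λ1 > λ2 > λ3 > 0 of C1⁻¹C2, and let ν = (ν1,ν2), μ = (μ1,μ2) be valid parameters with ν1μ2 − ν2μ1 > 0. Then the numbers λ̄ᵢ = (μ1+λᵢμ2)/(ν1+λᵢν2) (i = 1,2,3) are the eigenvalues of C_ν⁻¹C_μ, they satisfy λ̄1 > λ̄2 > λ̄3 > 0, and the pencil eccentricity transforms as √((λ̄1−λ̄2)/(λ̄1−λ̄3)) = √((ν1+λ3ν2)/(ν1+λ2ν2)) · √((λ1−λ2)/(λ1−λ3)). In particular, for ν = (1,0) the pencil eccentricity is invariant: √((λ̄1−λ̄2)/(λ̄1−λ̄3)) = √((λ1−λ2)/(λ1−λ3)) for every valid μ. -/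
open Matrix Polynomial

lemma my_eval_charpoly (M : Matrix (Fin 3) (Fin 3) ℝ) (x : ℝ) :
    M.charpoly.eval x = (x • (1 : Matrix (Fin 3) (Fin 3) ℝ) - M).det := by
  rw [Matrix.charpoly, ← coe_evalRingHom, RingHom.map_det]
  congr 1
  ext i j
  by_cases h : i = j <;>
    simp [h, charmatrix_apply, Matrix.one_apply, RingHom.mapMatrix_apply, Matrix.map_apply]

lemma det_aff (M : Matrix (Fin 3) (Fin 3) ℝ) (l1 l2 l3 : ℝ)
    (hchar : M.charpoly = (X - Polynomial.C l1) * (X - Polynomial.C l2) * (X - Polynomial.C l3))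
    (a b : ℝ) (hb : b ≠ 0) :
    (a • (1 : Matrix (Fin 3) (Fin 3) ℝ) + b • M).det
      = (a + b * l1) * (a + b * l2) * (a + b * l3) := by
  have h1 : a • (1 : Matrix (Fin 3) (Fin 3) ℝ) + b • M
      = (-b) • ((-(a/b)) • (1 : Matrix (Fin 3) (Fin 3) ℝ) - M) := by
    rw [smul_sub, smul_smul]
    field_simp
    rw [neg_smul, sub_neg_eq_add]
  have h2 : ((-(a/b)) • (1 : Matrix (Fin 3) (Fin 3) ℝ) - M).det = M.charpoly.eval (-(a/b)) := by
    rw [my_eval_charpoly]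
  rw [h1, Matrix.det_smul, h2, hchar]
  simp only [eval_mul, eval_sub, eval_X, eval_C, Fintype.card_fin]
  field_simp
  ring

lemma charpoly_pencil (C1 C2 : Matrix (Fin 3) (Fin 3) ℝ) (l1 l2 l3 ν1 ν2 μ1 μ2 : ℝ)
    (hd1 : C1.det ≠ 0)
    (hchar : (C1⁻¹ * C2).charpoly =
      (X - Polynomial.C l1) * (X - Polynomial.C l2) * (X - Polynomial.C l3))
    (hν2 : ν2 ≠ 0)
    (h1 : ν1 + l1 * ν2 ≠ 0) (h2 : ν1 + l2 * ν2 ≠ 0) (h3 : ν1 + l3 * ν2 ≠ 0) :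
    ((ν1 • C1 + ν2 • C2)⁻¹ * (μ1 • C1 + μ2 • C2)).charpoly =
      (X - Polynomial.C ((μ1 + l1 * μ2) / (ν1 + l1 * ν2))) *
      (X - Polynomial.C ((μ1 + l2 * μ2) / (ν1 + l2 * ν2))) *
      (X - Polynomial.C ((μ1 + l3 * μ2) / (ν1 + l3 * ν2))) := by
  set M := C1⁻¹ * C2 with hM
  have hu1 : IsUnit C1.det := isUnit_iff_ne_zero.mpr hd1
  have hC1M : C1 * M = C2 := by
    rw [hM, ← Matrix.mul_assoc, Matrix.mul_nonsing_inv _ hu1, Matrix.one_mul]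
  have key : ∀ a b : ℝ, a • C1 + b • C2 = C1 * (a • 1 + b • M) := by
    intro a b
    rw [Matrix.mul_add, mul_smul_comm, mul_smul_comm, Matrix.mul_one, hC1M]
  set Cν := ν1 • C1 + ν2 • C2 with hCν
  set Cμ := μ1 • C1 + μ2 • C2 with hCμ
  have hdetCν : Cν.det = C1.det * ((ν1 + ν2 * l1) * (ν1 + ν2 * l2) * (ν1 + ν2 * l3)) := by
    rw [hCν, key, Matrix.det_mul, det_aff M l1 l2 l3 hchar ν1 ν2 hν2]
  have hdν : Cν.det ≠ 0 := by
    rw [hdetCν]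
    exact mul_ne_zero hd1 (mul_ne_zero (mul_ne_zero
      (fun hc => h1 (by linear_combination hc))
      (fun hc => h2 (by linear_combination hc)))
      (fun hc => h3 (by linear_combination hc)))
  have huν : IsUnit Cν.det := isUnit_iff_ne_zero.mpr hdν
  have hCνN : Cν * (Cν⁻¹ * Cμ) = Cμ := by
    rw [← Matrix.mul_assoc, Matrix.mul_nonsing_inv _ huν, Matrix.one_mul]
  -- pointwise evaluation identity
  have heval : ∀ x : ℝ, x ≠ μ2 / ν2 →
      eval x (Polynomial.C Cν.det * (Cν⁻¹ * Cμ).charpoly) =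
      eval x (Polynomial.C Cν.det *
        ((X - Polynomial.C ((μ1 + l1 * μ2) / (ν1 + l1 * ν2))) *
         (X - Polynomial.C ((μ1 + l2 * μ2) / (ν1 + l2 * ν2))) *
         (X - Polynomial.C ((μ1 + l3 * μ2) / (ν1 + l3 * ν2))))) := by
    intro x hx
    have hb : x * ν2 - μ2 ≠ 0 := by
      intro hc
      apply hx
      field_simp
      linarith
    simp only [eval_mul, eval_C, eval_sub, eval_X]
    rw [my_eval_charpoly]
    have e1 : Cν.det * (x • (1 : Matrix (Fin 3) (Fin 3) ℝ) - Cν⁻¹ * Cμ).det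
        = (Cν * (x • (1 : Matrix (Fin 3) (Fin 3) ℝ) - Cν⁻¹ * Cμ)).det := by
      rw [Matrix.det_mul]
    have e2 : Cν * (x • (1 : Matrix (Fin 3) (Fin 3) ℝ) - Cν⁻¹ * Cμ)
        = (x * ν1 - μ1) • C1 + (x * ν2 - μ2) • C2 := by
      rw [Matrix.mul_sub, mul_smul_comm, Matrix.mul_one, hCνN, hCν, hCμ]
      ext i j
      simp [Matrix.add_apply, Matrix.smul_apply, Matrix.sub_apply]
      ring
    rw [e1, e2, key, Matrix.det_mul,
      det_aff M l1 l2 l3 hchar _ _ hb, hdetCν]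
    have f1 : (x * ν1 - μ1) + (x * ν2 - μ2) * l1 = (ν1 + ν2 * l1) * (x - (μ1 + l1 * μ2) / (ν1 + l1 * ν2)) := by
      rw [show ν1 + ν2 * l1 = ν1 + l1 * ν2 by ring, mul_sub, mul_div_cancel₀ _ h1]
      ring
    have f2 : (x * ν1 - μ1) + (x * ν2 - μ2) * l2 = (ν1 + ν2 * l2) * (x - (μ1 + l2 * μ2) / (ν1 + l2 * ν2)) := by
      rw [show ν1 + ν2 * l2 = ν1 + l2 * ν2 by ring, mul_sub, mul_div_cancel₀ _ h2]
      ring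
    have f3 : (x * ν1 - μ1) + (x * ν2 - μ2) * l3 = (ν1 + ν2 * l3) * (x - (μ1 + l3 * μ2) / (ν1 + l3 * ν2)) := by
      rw [show ν1 + ν2 * l3 = ν1 + l3 * ν2 by ring, mul_sub, mul_div_cancel₀ _ h3]
      ring
    rw [f1, f2, f3]
    ring
  have hinf : Set.Infinite { x : ℝ | eval x (Polynomial.C Cν.det * (Cν⁻¹ * Cμ).charpoly) =
      eval x (Polynomial.C Cν.det *
        ((X - Polynomial.C ((μ1 + l1 * μ2) / (ν1 + l1 * ν2))) *
         (X - Polynomial.C ((μ1 + l2 * μ2) / (ν1 + l2 * ν2))) *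
         (X - Polynomial.C ((μ1 + l3 * μ2) / (ν1 + l3 * ν2))))) } := by
    apply Set.Infinite.mono (s := ({μ2 / ν2} : Set ℝ)ᶜ)
    · exact fun x hx => heval x hx
    · exact (Set.finite_singleton _).infinite_compl
  have := Polynomial.eq_of_infinite_eval_eq _ _ hinf
  exact mul_left_cancel₀ (by simpa using hdν) this

theorem pencil_eccentricity_transform' (C1 C2 : Matrix (Fin 3) (Fin 3) ℝ)
    (l1 l2 l3 : ℝ)
    (hC1 : C1.det < 0)
    (h12 : l2 < l1) (h23 : l3 < l2) (h3 : 0 < l3)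
    (hchar : (C1⁻¹ * C2).charpoly =
      (X - Polynomial.C l1) * (X - Polynomial.C l2) * (X - Polynomial.C l3))
    (ν1 ν2 μ1 μ2 : ℝ)
    (hν2 : 0 < ν2) (hν : 0 < ν1 + l3 * ν2)
    (hμ2 : 0 < μ2) (hμ : 0 < μ1 + l3 * μ2)
    (hcross : 0 < ν1 * μ2 - ν2 * μ1) :
    let Cν := ν1 • C1 + ν2 • C2
    let Cμ := μ1 • C1 + μ2 • C2
    let lb1 := (μ1 + l1 * μ2) / (ν1 + l1 * ν2)
    let lb2 := (μ1 + l2 * μ2) / (ν1 + l2 * ν2)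
    let lb3 := (μ1 + l3 * μ2) / (ν1 + l3 * ν2)
    ((Cν⁻¹ * Cμ).charpoly =
      (X - Polynomial.C lb1) * (X - Polynomial.C lb2) * (X - Polynomial.C lb3)) ∧
    (lb2 < lb1 ∧ lb3 < lb2 ∧ 0 < lb3) ∧
    Real.sqrt ((lb1 - lb2) / (lb1 - lb3)) =
      Real.sqrt ((ν1 + l3 * ν2) / (ν1 + l2 * ν2)) *
        Real.sqrt ((l1 - l2) / (l1 - l3)) ∧
    (∀ m1 m2 : ℝ, 0 < m2 → 0 < m1 + l3 * m2 →
      Real.sqrt (((m1 + l1 * m2) - (m1 + l2 * m2)) /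
          ((m1 + l1 * m2) - (m1 + l3 * m2))) =
        Real.sqrt ((l1 - l2) / (l1 - l3))) := by
  intro Cν Cμ lb1 lb2 lb3
  have h13 : l3 < l1 := lt_trans h23 h12
  have hn1 : 0 < ν1 + l1 * ν2 := by nlinarith
  have hn2 : 0 < ν1 + l2 * ν2 := by nlinarith
  have hm1 : 0 < μ1 + l1 * μ2 := by nlinarith
  have hm2 : 0 < μ1 + l2 * μ2 := by nlinarith
  refine ⟨?_, ⟨?_, ?_, ?_⟩, ?_, ?_⟩
  · exact charpoly_pencil C1 C2 l1 l2 l3 ν1 ν2 μ1 μ2 (ne_of_lt hC1) hchar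
      (ne_of_gt hν2) (ne_of_gt hn1) (ne_of_gt hn2) (ne_of_gt hν)
  · show (μ1 + l2 * μ2) / (ν1 + l2 * ν2) < (μ1 + l1 * μ2) / (ν1 + l1 * ν2)
    rw [div_lt_div_iff₀ hn2 hn1]
    nlinarith [mul_pos (show (0:ℝ) < l1 - l2 by linarith) hcross]
  · show (μ1 + l3 * μ2) / (ν1 + l3 * ν2) < (μ1 + l2 * μ2) / (ν1 + l2 * ν2)
    rw [div_lt_div_iff₀ hν hn2]
    nlinarith [mul_pos (show (0:ℝ) < l2 - l3 by linarith) hcross]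
  · exact div_pos hμ hν
  · have key : (lb1 - lb2) / (lb1 - lb3)
        = ((ν1 + l3 * ν2) / (ν1 + l2 * ν2)) * ((l1 - l2) / (l1 - l3)) := by
      show ((μ1 + l1 * μ2) / (ν1 + l1 * ν2) - (μ1 + l2 * μ2) / (ν1 + l2 * ν2)) /
          ((μ1 + l1 * μ2) / (ν1 + l1 * ν2) - (μ1 + l3 * μ2) / (ν1 + l3 * ν2)) = _
      have hd : (μ1 + l1 * μ2) / (ν1 + l1 * ν2) - (μ1 + l3 * μ2) / (ν1 + l3 * ν2)
          = ((ν1 * μ2 - ν2 * μ1) * (l1 - l3)) / ((ν1 + l1 * ν2) * (ν1 + l3 * ν2)) := by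
        rw [div_sub_div _ _ (ne_of_gt hn1) (ne_of_gt hν)]
        ring
      have hn : (μ1 + l1 * μ2) / (ν1 + l1 * ν2) - (μ1 + l2 * μ2) / (ν1 + l2 * ν2)
          = ((ν1 * μ2 - ν2 * μ1) * (l1 - l2)) / ((ν1 + l1 * ν2) * (ν1 + l2 * ν2)) := by
        rw [div_sub_div _ _ (ne_of_gt hn1) (ne_of_gt hn2)]
        ring
      have e1 : ν1 * μ2 - ν2 * μ1 ≠ 0 := ne_of_gt hcross
      have e2 : l1 - l2 ≠ 0 := by linarith
      have e3 : l1 - l3 ≠ 0 := by linarith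
      have e4 : ν1 + l1 * ν2 ≠ 0 := ne_of_gt hn1
      have e5 : ν1 + l2 * ν2 ≠ 0 := ne_of_gt hn2
      have e6 : ν1 + l3 * ν2 ≠ 0 := ne_of_gt hν
      rw [hd, hn]
      rw [div_div_div_eq, div_mul_div_comm, div_eq_div_iff
        (mul_ne_zero (mul_ne_zero e4 e5) (mul_ne_zero e1 e3)) (mul_ne_zero e5 e3)]
      ring
    rw [key, Real.sqrt_mul (le_of_lt (div_pos hν hn2))]
  · intro m1 m2 hm2' hm3'
    congr 1
    rw [div_eq_div_iff (by nlinarith) (by linarith)]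
    ring

/-- for valid parameters `ν`, `μ` with `ν1μ2 − ν2μ1 > 0`, the numbers
`λ̄ᵢ = (μ1+λᵢμ2)/(ν1+λᵢν2)` are the eigenvalues of `C_ν⁻¹ C_μ`, are ordered
`λ̄1 > λ̄2 > λ̄3 > 0`, and the pencil eccentricity transforms as stated. In
particular, for `ν = (1,0)` the pencil eccentricity is invariant. -/
theorem pencil_eccentricity_transform (C1 C2 : Matrix (Fin 3) (Fin 3) ℝ)
    (l1 l2 l3 : ℝ)
    (hC1 : SA1 C1) (hC2 : SA1 C2)
    (h12 : l2 < l1) (h23 : l3 < l2) (h3 : 0 < l3)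
    (hchar : (C1⁻¹ * C2).charpoly =
      (X - Polynomial.C l1) * (X - Polynomial.C l2) * (X - Polynomial.C l3))
    (hSA3 : ∀ u : Fin 3 → ℝ, u ≠ 0 → u ⬝ᵥ C2.mulVec u = 0 → u ⬝ᵥ C1.mulVec u < 0)
    (ν1 ν2 μ1 μ2 : ℝ)
    (hν2 : 0 < ν2) (hν : 0 < ν1 + l3 * ν2)
    (hμ2 : 0 < μ2) (hμ : 0 < μ1 + l3 * μ2)
    (hcross : 0 < ν1 * μ2 - ν2 * μ1) :
    let Cν := ν1 • C1 + ν2 • C2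
    let Cμ := μ1 • C1 + μ2 • C2
    let lb1 := (μ1 + l1 * μ2) / (ν1 + l1 * ν2)
    let lb2 := (μ1 + l2 * μ2) / (ν1 + l2 * ν2)
    let lb3 := (μ1 + l3 * μ2) / (ν1 + l3 * ν2)
    ((Cν⁻¹ * Cμ).charpoly =
      (X - Polynomial.C lb1) * (X - Polynomial.C lb2) * (X - Polynomial.C lb3)) ∧
    (lb2 < lb1 ∧ lb3 < lb2 ∧ 0 < lb3) ∧
    Real.sqrt ((lb1 - lb2) / (lb1 - lb3)) =
      Real.sqrt ((ν1 + l3 * ν2) / (ν1 + l2 * ν2)) *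
        Real.sqrt ((l1 - l2) / (l1 - l3)) ∧
    (∀ m1 m2 : ℝ, 0 < m2 → 0 < m1 + l3 * m2 →
      Real.sqrt (((m1 + l1 * m2) - (m1 + l2 * m2)) /
          ((m1 + l1 * m2) - (m1 + l3 * m2))) =
        Real.sqrt ((l1 - l2) / (l1 - l3))) := by
  exact pencil_eccentricity_transform' C1 C2 l1 l2 l3 hC1.2.2 h12 h23 h3 hchar ν1 ν2 μ1 μ2 hν2 hν hμ2 hμ hcross
end

section
/- Let C1 be a real symmetric 3×3 matrix with (x,y,0)C1(x,y,0)ᵀ > 0 for all (x,y) ≠ (0,0), and let M = (m_{ij}) be a nonsingular real 3×3 matrix with MᵀC1M = diag(1,1,−1). Then for every (x,y) in the closed unit disk 𝔻 = {(x,y) : x²+y² ≤ 1} the denominator m31 x + m32 y + m33 is nonzero, and the projective map M̂(x,y) = ((m11 x + m12 y + m13)/(m31 x + m32 y + m33), (m21 x + m22 y + m23)/(m31 x + m32 y + m33)) is injective on 𝔻. -/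
open Matrix

/-- if `(x,y,0)C1(x,y,0)ᵀ > 0` for `(x,y) ≠ (0,0)` and
`MᵀC1M = diag(1,1,−1)` with `M` nonsingular, then the denominator
`m31 x + m32 y + m33` of the projective map `M̂` is nonzero on the closed
unit disk, and `M̂` is injective there. -/
theorem projective_map_injective_on_disk (C1 M : Matrix (Fin 3) (Fin 3) ℝ)
    (hsym : C1.IsSymm)
    (hpos : ∀ x y : ℝ, (x, y) ≠ (0, 0) → 0 < ![x, y, 0] ⬝ᵥ C1.mulVec ![x, y, 0])
    (hM : M.det ≠ 0)
    (hdiag : Mᵀ * C1 * M = Matrix.diagonal ![1, 1, -1]) :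
    (∀ p : ℝ × ℝ, p.1 ^ 2 + p.2 ^ 2 ≤ 1 →
      M 2 0 * p.1 + M 2 1 * p.2 + M 2 2 ≠ 0) ∧
    Set.InjOn (fun p : ℝ × ℝ =>
      ((M 0 0 * p.1 + M 0 1 * p.2 + M 0 2) / (M 2 0 * p.1 + M 2 1 * p.2 + M 2 2),
       (M 1 0 * p.1 + M 1 1 * p.2 + M 1 2) / (M 2 0 * p.1 + M 2 1 * p.2 + M 2 2)))
      {p : ℝ × ℝ | p.1 ^ 2 + p.2 ^ 2 ≤ 1} := by
  have hunit : IsUnit M.det := isUnit_iff_ne_zero.mpr hM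
  have hinj : Function.Injective M.mulVec := by
    intro a b hab
    have h := congrArg (M⁻¹.mulVec) hab
    rwa [Matrix.mulVec_mulVec, Matrix.mulVec_mulVec, Matrix.nonsing_inv_mul M hunit,
      Matrix.one_mulVec, Matrix.one_mulVec] at h
  have quad : ∀ u : Fin 3 → ℝ,
      M.mulVec u ⬝ᵥ C1.mulVec (M.mulVec u) = u 0 ^ 2 + u 1 ^ 2 - u 2 ^ 2 := by
    intro u
    have h1 : u ⬝ᵥ (Mᵀ * C1 * M).mulVec u
        = M.mulVec u ⬝ᵥ C1.mulVec (M.mulVec u) := by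
      rw [Matrix.mul_assoc, ← Matrix.mulVec_mulVec, Matrix.dotProduct_mulVec,
        Matrix.vecMul_transpose, ← Matrix.mulVec_mulVec]
    rw [← h1, hdiag]
    simp [Matrix.mulVec, dotProduct, Matrix.diagonal, Fin.sum_univ_three]
    ring
  have hmv : ∀ (x y : ℝ) (i : Fin 3),
      M.mulVec ![x, y, 1] i = M i 0 * x + M i 1 * y + M i 2 := by
    intro x y i
    simp [Matrix.mulVec, dotProduct, Fin.sum_univ_three]
  have hden : ∀ p : ℝ × ℝ, p.1 ^ 2 + p.2 ^ 2 ≤ 1 →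
      M.mulVec ![p.1, p.2, 1] 2 ≠ 0 := by
    intro p hp h0
    set u := M.mulVec ![p.1, p.2, 1] with hu
    have hq : u ⬝ᵥ C1.mulVec u = p.1 ^ 2 + p.2 ^ 2 - 1 := by
      rw [hu, quad ![p.1, p.2, 1]]
      norm_num [Matrix.cons_val_two, Matrix.vecHead, Matrix.vecTail]
    by_cases hne : (u 0, u 1) = (0, 0)
    · have hu0 : u 0 = 0 := congrArg Prod.fst hne
      have hu1 : u 1 = 0 := congrArg Prod.snd hne
      have huz : u = 0 := by
        funext i; fin_cases i <;> simp [hu0, hu1, h0]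
      have h01 : M.mulVec ![p.1, p.2, 1] = M.mulVec 0 := by
        rw [← hu, huz, Matrix.mulVec_zero]
      have := hinj h01
      have h2 := congrFun this 2
      simp at h2
    · have hpos' := hpos (u 0) (u 1) hne
      have heqv : ![u 0, u 1, 0] = u := by
        funext i; fin_cases i <;> simp [h0]
      rw [heqv] at hpos'
      linarith
  constructor
  · intro p hp
    have h := hden p hp
    rwa [hmv] at h
  · intro p hp q hq heq
    simp only [Prod.mk.injEq] at heq
    have hd : M.mulVec ![p.1, p.2, 1] 2 ≠ 0 := hden p hp
    have he : M.mulVec ![q.1, q.2, 1] 2 ≠ 0 := hden q hq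
    set u := M.mulVec ![p.1, p.2, 1] with hu
    set v := M.mulVec ![q.1, q.2, 1] with hv
    have h0 : u 0 * v 2 = v 0 * u 2 := by
      have := heq.1
      rw [← hmv p.1 p.2 0, ← hmv p.1 p.2 2, ← hmv q.1 q.2 0, ← hmv q.1 q.2 2,
        ← hu, ← hv, div_eq_div_iff hd he] at this
      exact this
    have h1 : u 1 * v 2 = v 1 * u 2 := by
      have := heq.2
      rw [← hmv p.1 p.2 1, ← hmv p.1 p.2 2, ← hmv q.1 q.2 1, ← hmv q.1 q.2 2,
        ← hu, ← hv, div_eq_div_iff hd he] at this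
      exact this
    have hsmul : M.mulVec (v 2 • ![p.1, p.2, 1]) = M.mulVec (u 2 • ![q.1, q.2, 1]) := by
      rw [Matrix.mulVec_smul, Matrix.mulVec_smul, ← hu, ← hv]
      funext i
      fin_cases i <;> simp [smul_eq_mul] <;> ring_nf
      · linarith [h0]
      · linarith [h1]
    have hkey := hinj hsmul
    have h2 : v 2 = u 2 := by
      have := congrFun hkey 2
      simpa using this
    have hx : v 2 * p.1 = u 2 * q.1 := by
      have := congrFun hkey 0
      simpa [smul_eq_mul] using this
    have hy : v 2 * p.2 = u 2 * q.2 := by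
      have := congrFun hkey 1
      simpa [smul_eq_mul] using this
    have hp1 : p.1 = q.1 := by
      rw [h2] at hx
      exact mul_left_cancel₀ hd hx
    have hp2 : p.2 = q.2 := by
      rw [h2] at hy
      exact mul_left_cancel₀ hd hy
    exact Prod.ext hp1 hp2
end

section
/- Define G(e,f) = (2√e/(1+e), 2√e f/(f²+e)). Then for every (e,f) ∈ Δ = {(e,f) : 0 < f < e < 1}, G(e,f) ∈ Δ and the billiard rotation number is invariant under G: ρ̂(G(e,f)) = ρ̂(e,f). -/
set_option maxHeartbeats 1000000

open Filter Topology


open Real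

section LandenAux

lemma denom_pos {e : ℝ} (he : e ^ 2 < 1) (τ : ℝ) : 0 < 1 - e ^ 2 * Real.sin τ ^ 2 := by
  nlinarith [Real.sin_sq_le_one τ, sq_nonneg e, sq_nonneg (Real.sin τ)]

lemma cont_integrand {e : ℝ} (he : e ^ 2 < 1) :
    Continuous fun τ => 1 / Real.sqrt (1 - e ^ 2 * Real.sin τ ^ 2) := by
  apply continuous_const.div
  · fun_prop
  · intro τ
    exact ne_of_gt (Real.sqrt_pos.2 (denom_pos he τ))

lemma ellF_cont {e : ℝ} (he : e ^ 2 < 1) : Continuous fun φ => ellF φ e := by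
  unfold ellF
  exact intervalIntegral.continuous_primitive
    (fun a b => ((cont_integrand he).intervalIntegrable a b)) 0

lemma eprime_sq {e : ℝ} (he0 : 0 < e) : (2 * Real.sqrt e / (1 + e)) ^ 2 = 4 * e / (1 + e) ^ 2 := by
  rw [div_pow, mul_pow, Real.sq_sqrt he0.le]; ring_nf

lemma eprime_sq_lt_one {e : ℝ} (he0 : 0 < e) (he1 : e < 1) :
    (2 * Real.sqrt e / (1 + e)) ^ 2 < 1 := by
  rw [eprime_sq he0]
  rw [div_lt_one (by positivity)]
  nlinarith

/-- Ascending Landen transformation for the incomplete elliptic integral. -/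
lemma landen {e : ℝ} (he0 : 0 < e) (he1 : e < 1) {φ : ℝ} (h0 : 0 ≤ φ) (h1 : φ < π / 2) :
    ellF (Real.arcsin ((1 + e) * Real.sin φ / (1 + e * Real.sin φ ^ 2))) (2 * Real.sqrt e / (1 + e))
      = (1 + e) * ellF φ e := by
  set e' := 2 * Real.sqrt e / (1 + e) with he'
  have he'2 : e' ^ 2 = 4 * e / (1 + e) ^ 2 := eprime_sq he0
  have he'1 : e' ^ 2 < 1 := eprime_sq_lt_one he0 he1
  have he2 : e ^ 2 < 1 := by nlinarith
  set F : ℝ → ℝ := fun τ => Real.arcsin ((1 + e) * Real.sin τ / (1 + e * Real.sin τ ^ 2)) with hF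
  set F' : ℝ → ℝ := fun τ => (1 + e) * (1 - e * Real.sin τ ^ 2) /
      ((1 + e * Real.sin τ ^ 2) * Real.sqrt (1 - e ^ 2 * Real.sin τ ^ 2)) with hF'
  set g : ℝ → ℝ := fun u => 1 / Real.sqrt (1 - e' ^ 2 * Real.sin u ^ 2) with hg
  -- generic facts about points of [0, φ]
  have hsub : Set.uIcc 0 φ = Set.Icc 0 φ := Set.uIcc_of_le h0
  have hmem : ∀ x ∈ Set.uIcc 0 φ, 0 ≤ Real.sin x ∧ Real.sin x < 1 ∧ 0 < Real.cos x := by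
    intro x hx
    rw [hsub, Set.mem_Icc] at hx
    refine ⟨Real.sin_nonneg_of_nonneg_of_le_pi hx.1 (by linarith [Real.pi_pos]),
      ?_, Real.cos_pos_of_mem_Ioo ⟨by linarith [Real.pi_pos], by linarith⟩⟩
    calc Real.sin x < Real.sin (π/2) := by
          apply Real.sin_lt_sin_of_lt_of_le_pi_div_two (by linarith [Real.pi_pos]) (le_refl _)
          linarith
      _ = 1 := Real.sin_pi_div_two
  -- derivative of F
  have hderiv : ∀ x ∈ Set.uIcc 0 φ, HasDerivAt F (F' x) x := by
    intro x hx
    obtain ⟨hs0, hs1, hc0⟩ := hmem x hx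
    set s := Real.sin x with hs
    have hden : (0:ℝ) < 1 + e * s ^ 2 := by nlinarith
    have hes1 : e * s < 1 := by nlinarith
    have hys : (1 + e) * s / (1 + e * s ^ 2) < 1 := by
      rw [div_lt_one hden]
      nlinarith [mul_pos (sub_pos.2 hs1) (sub_pos.2 hes1)]
    have hys0 : 0 ≤ (1 + e) * s / (1 + e * s ^ 2) := by positivity
    have hq : (0:ℝ) < 1 - e ^ 2 * s ^ 2 := denom_pos he2 x
    -- inner function derivative
    have hinner : HasDerivAt (fun τ => (1 + e) * Real.sin τ / (1 + e * Real.sin τ ^ 2))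
        (((1 + e) * Real.cos x * (1 + e * s ^ 2) - (1 + e) * s * (e * (2 * s * Real.cos x)))
          / (1 + e * s ^ 2) ^ 2) x := by
      have h1' : HasDerivAt (fun τ => (1 + e) * Real.sin τ) ((1 + e) * Real.cos x) x :=
        (Real.hasDerivAt_sin x).const_mul (1 + e)
      have h2' : HasDerivAt (fun τ => 1 + e * Real.sin τ ^ 2) (e * (2 * s * Real.cos x)) x := by
        have := ((Real.hasDerivAt_sin x).pow 2).const_mul e
        simpa [hs, mul_comm, mul_assoc, mul_left_comm] using this.const_add 1
      exact h1'.div h2' (ne_of_gt hden)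
    have harc : HasDerivAt Real.arcsin
        (1 / Real.sqrt (1 - ((1 + e) * s / (1 + e * s ^ 2)) ^ 2))
        ((1 + e) * s / (1 + e * s ^ 2)) :=
      Real.hasDerivAt_arcsin (by linarith) (ne_of_lt hys)
    have hcomp := harc.comp x hinner
    refine HasDerivAt.congr_deriv hcomp ?_
    symm
    -- identify the value
    have hcs : Real.cos x ^ 2 = 1 - s ^ 2 := by
      have := Real.sin_sq_add_cos_sq x; nlinarith
    have hr2 : Real.sqrt (1 - e ^ 2 * s ^ 2) ^ 2 = 1 - e ^ 2 * s ^ 2 :=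
      Real.sq_sqrt hq.le
    have hkey : 1 - ((1 + e) * s / (1 + e * s ^ 2)) ^ 2
        = (Real.cos x * Real.sqrt (1 - e ^ 2 * s ^ 2) / (1 + e * s ^ 2)) ^ 2 := by
      simp only [div_pow, mul_pow]
      rw [hr2, hcs]
      field_simp
      ring
    have hsq : Real.sqrt (1 - ((1 + e) * s / (1 + e * s ^ 2)) ^ 2)
        = Real.cos x * Real.sqrt (1 - e ^ 2 * s ^ 2) / (1 + e * s ^ 2) := by
      rw [hkey]
      exact Real.sqrt_sq (by positivity)
    rw [hsq, hF']
    simp only [← hs]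
    have hsq0 : 0 < Real.sqrt (1 - e ^ 2 * s ^ 2) := Real.sqrt_pos.2 hq
    have hne1 : Real.cos x ≠ 0 := ne_of_gt hc0
    have hne2 : Real.sqrt (1 - e ^ 2 * s ^ 2) ≠ 0 := ne_of_gt hsq0
    have hne3 : (1 + e * s ^ 2) ≠ 0 := ne_of_gt hden
    field_simp
    ring
  -- continuity of F'
  have hF'cont : ContinuousOn F' (Set.uIcc 0 φ) := by
    apply Continuous.continuousOn
    apply Continuous.div
    · fun_prop
    · fun_prop
    · intro x
      have hden : (0:ℝ) < 1 + e * Real.sin x ^ 2 := by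
        nlinarith [sq_nonneg (Real.sin x)]
      have hq : (0:ℝ) < 1 - e ^ 2 * Real.sin x ^ 2 := denom_pos he2 x
      exact ne_of_gt (mul_pos hden (Real.sqrt_pos.2 hq))
  have hgcont : Continuous g := cont_integrand he'1
  have key := intervalIntegral.integral_comp_smul_deriv hderiv hF'cont hgcont
  have hF0 : F 0 = 0 := by simp [hF]
  -- pointwise simplification of the LHS integrand
  have hpt : ∀ x ∈ Set.uIcc 0 φ,
      F' x • (g ∘ F) x = (1 + e) * (1 / Real.sqrt (1 - e ^ 2 * Real.sin x ^ 2)) := by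
    intro x hx
    obtain ⟨hs0, hs1, hc0⟩ := hmem x hx
    set s := Real.sin x with hs
    have hden : (0:ℝ) < 1 + e * s ^ 2 := by nlinarith
    have hq : (0:ℝ) < 1 - e ^ 2 * s ^ 2 := denom_pos he2 x
    have hys1 : (1 + e) * s / (1 + e * s ^ 2) ≤ 1 := by
      rw [div_le_one hden]; nlinarith
    have hys0 : 0 ≤ (1 + e) * s / (1 + e * s ^ 2) := by positivity
    have hsinF : Real.sin (F x) = (1 + e) * s / (1 + e * s ^ 2) :=
      Real.sin_arcsin (by linarith) hys1
    have hes : e * s ^ 2 < 1 := by nlinarith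
    have hval : 1 - e' ^ 2 * Real.sin (F x) ^ 2
        = ((1 - e * s ^ 2) / (1 + e * s ^ 2)) ^ 2 := by
      rw [hsinF, he'2]
      field_simp
      ring
    have : g (F x) = (1 + e * s ^ 2) / (1 - e * s ^ 2) := by
      rw [hg]
      simp only
      rw [hval, Real.sqrt_sq (div_nonneg (by linarith) hden.le)]
      rw [one_div_div]
    simp only [Function.comp_apply, smul_eq_mul, this, hF']
    simp only [← hs]
    have hsq0 : 0 < Real.sqrt (1 - e ^ 2 * s ^ 2) := Real.sqrt_pos.2 hq
    have hne1 : (1 - e * s ^ 2) ≠ 0 := ne_of_gt (by linarith)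
    have hne2 : Real.sqrt (1 - e ^ 2 * s ^ 2) ≠ 0 := ne_of_gt hsq0
    have hne3 : (1 + e * s ^ 2) ≠ 0 := ne_of_gt hden
    field_simp
  calc ellF (F φ) e' = ∫ x in (F 0)..(F φ), g x := by rw [hF0]; rfl
    _ = ∫ x in (0:ℝ)..φ, F' x • (g ∘ F) x := key.symm
    _ = ∫ x in (0:ℝ)..φ, (1 + e) * (1 / Real.sqrt (1 - e ^ 2 * Real.sin x ^ 2)) :=
        intervalIntegral.integral_congr hpt
    _ = (1 + e) * ellF φ e := by rw [intervalIntegral.integral_const_mul]; rfl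

/-- Ascending Landen transformation for the complete elliptic integral. -/
lemma landenK {e : ℝ} (he0 : 0 < e) (he1 : e < 1) :
    ellK (2 * Real.sqrt e / (1 + e)) = (1 + e) * ellK e := by
  have he2 : e ^ 2 < 1 := by nlinarith
  set e' := 2 * Real.sqrt e / (1 + e) with he'
  have hc1 : Continuous fun φ => ellF φ e' := ellF_cont (eprime_sq_lt_one he0 he1)
  have hFc : Continuous fun φ : ℝ =>
      Real.arcsin ((1 + e) * Real.sin φ / (1 + e * Real.sin φ ^ 2)) := by
    apply Real.continuous_arcsin.comp
    apply Continuous.div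
    · fun_prop
    · fun_prop
    · intro x
      have := sq_nonneg (Real.sin x)
      positivity
  have hval : Real.arcsin ((1 + e) * Real.sin (π/2) / (1 + e * Real.sin (π/2) ^ 2)) = π/2 := by
    rw [Real.sin_pi_div_two, one_pow, mul_one, mul_one, div_self (by positivity),
      Real.arcsin_one]
  have t1 : Tendsto (fun φ => ellF
      (Real.arcsin ((1 + e) * Real.sin φ / (1 + e * Real.sin φ ^ 2))) e')
      (𝓝[<] (π/2)) (𝓝 (ellK e')) := by
    have h := ((hc1.comp hFc).tendsto (π/2)).mono_left
      (nhdsWithin_le_nhds (s := Set.Iio (π/2)))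
    have h2 : ((fun φ => ellF φ e') ∘ fun φ =>
        Real.arcsin ((1 + e) * Real.sin φ / (1 + e * Real.sin φ ^ 2))) (π/2) = ellK e' := by
      simp only [Function.comp_apply, hval]; rfl
    rw [h2] at h
    exact h
  have t2 : Tendsto (fun φ => (1 + e) * ellF φ e) (𝓝[<] (π/2)) (𝓝 ((1 + e) * ellK e)) := by
    have h := (((continuous_const (y := (1 + e))).mul (ellF_cont he2)).tendsto (π/2)).mono_left
      (nhdsWithin_le_nhds (s := Set.Iio (π/2)))
    exact h
  have heq : (fun φ => ellF
      (Real.arcsin ((1 + e) * Real.sin φ / (1 + e * Real.sin φ ^ 2))) e')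
      =ᶠ[𝓝[<] (π/2)] (fun φ => (1 + e) * ellF φ e) := by
    filter_upwards [Ioo_mem_nhdsLT_of_mem (Set.mem_Ioc.2 ⟨by positivity, le_refl _⟩)]
      with φ hφ
    exact landen he0 he1 hφ.1.le hφ.2
  exact tendsto_nhds_unique (t1.congr' heq) t2

end LandenAux

/-- Gauss symmetry: `G(e,f) = (2√e/(1+e), 2√e f/(f²+e))` maps
`Δ` into itself and leaves the billiard rotation number invariant. -/
theorem gauss_symmetry (e f : ℝ) (hf : 0 < f) (hfe : f < e) (he : e < 1) :
    let e' := 2 * Real.sqrt e / (1 + e)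
    let f' := 2 * Real.sqrt e * f / (f ^ 2 + e)
    (0 < f' ∧ f' < e' ∧ e' < 1) ∧ rhoHat e' f' = rhoHat e f := by
  intro e' f'
  have hee : e' = 2 * Real.sqrt e / (1 + e) := rfl
  have hff : f' = 2 * Real.sqrt e * f / (f ^ 2 + e) := rfl
  have he0 : 0 < e := hf.trans hfe
  have hse : 0 < Real.sqrt e := Real.sqrt_pos.2 he0
  have hse2 : Real.sqrt e ^ 2 = e := Real.sq_sqrt he0.le
  have hse1 : Real.sqrt e < 1 := by
    rw [show (1:ℝ) = Real.sqrt 1 by simp]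
    exact Real.sqrt_lt_sqrt he0.le he
  have hf2e : f ^ 2 < e := by nlinarith
  -- Δ membership
  have hf'pos : 0 < f' := by
    have : 0 < f ^ 2 + e := by positivity
    positivity
  have hf'e' : f' < e' := by
    rw [div_lt_div_iff₀ (by positivity) (by positivity)]
    nlinarith [mul_pos (sub_pos.2 (show f < 1 by linarith)) (sub_pos.2 hfe), hse]
  have he'1 : e' < 1 := by
    rw [div_lt_one (by positivity)]
    nlinarith [sq_nonneg (1 - Real.sqrt e)]
  refine ⟨⟨hf'pos, hf'e', he'1⟩, ?_⟩
  -- the angle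
  set t := Real.sqrt ((e ^ 2 - f ^ 2) / (e ^ 2 * (1 - f ^ 2))) with htdef
  have harg0 : 0 ≤ (e ^ 2 - f ^ 2) / (e ^ 2 * (1 - f ^ 2)) := by
    apply div_nonneg (by nlinarith)
    have : 0 < 1 - f ^ 2 := by nlinarith
    positivity
  have h1f : (0:ℝ) < 1 - f ^ 2 := by nlinarith
  have harg1 : (e ^ 2 - f ^ 2) / (e ^ 2 * (1 - f ^ 2)) < 1 := by
    rw [div_lt_one (by positivity)]
    nlinarith [mul_pos (mul_pos hf hf) (sub_pos.2 (show e * e < 1 by nlinarith))]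
  have ht0 : 0 ≤ t := Real.sqrt_nonneg _
  have ht1 : t < 1 := by
    have h := Real.sqrt_lt_sqrt harg0 harg1
    rwa [Real.sqrt_one] at h
  have ht2 : t ^ 2 = (e ^ 2 - f ^ 2) / (e ^ 2 * (1 - f ^ 2)) := Real.sq_sqrt harg0
  have hsin : Real.sin (omegaHat e f) = t := Real.sin_arcsin (by linarith) ht1.le
  have hw0 : 0 ≤ omegaHat e f := Real.arcsin_nonneg.2 ht0
  have hw1 : omegaHat e f < π / 2 := by
    rw [omegaHat, Real.arcsin_lt_pi_div_two]; exact ht1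
  -- e'^2 and f'^2
  have he'2 : e' ^ 2 = 4 * e / (1 + e) ^ 2 := eprime_sq he0
  have hf'2 : f' ^ 2 = 4 * e * f ^ 2 / (f ^ 2 + e) ^ 2 := by
    rw [hff, div_pow, mul_pow, mul_pow, hse2]; ring_nf
  rw [hee] at hf'e' he'1
  rw [hff] at hf'pos
  clear_value e' f'
  -- omegaHat transforms correctly
  have homega : omegaHat e' f' =
      Real.arcsin ((1 + e) * Real.sin (omegaHat e f) / (1 + e * Real.sin (omegaHat e f) ^ 2)) := by
    rw [hsin, omegaHat]
    congr 1
    have hden : (0:ℝ) < 1 + e * t ^ 2 := by nlinarith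
    have hrhs0 : 0 ≤ (1 + e) * t / (1 + e * t ^ 2) := by positivity
    have hd1 : (0:ℝ) < e' ^ 2 * (1 - f' ^ 2) := by
      apply mul_pos (by rw [he'2]; positivity)
      rw [hf'2, sub_pos, div_lt_one (by positivity)]
      nlinarith [sq_nonneg (e - f ^ 2), hf2e]
    have key : (e' ^ 2 - f' ^ 2) / (e' ^ 2 * (1 - f' ^ 2))
        = ((1 + e) * t / (1 + e * t ^ 2)) ^ 2 := by
      rw [div_pow, mul_pow,
        div_eq_div_iff (ne_of_gt hd1) (ne_of_gt (pow_pos hden 2)),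
        he'2, hf'2, ht2]
      have h1 : (1:ℝ) + e ≠ 0 := by positivity
      have h2 : f ^ 2 + e ≠ 0 := by positivity
      have h3 : e ^ 2 * (1 - f ^ 2) ≠ 0 := by positivity
      field_simp
      ring
    rw [key, Real.sqrt_sq hrhs0]
  -- conclusion
  rw [rhoHat, rhoHat, homega, hee, landen he0 he hw0 hw1, landenK he0 he,
    show (2:ℝ) * ((1 + e) * ellK e) = (1 + e) * (2 * ellK e) by ring,
    mul_div_mul_left _ _ (by positivity : (1:ℝ) + e ≠ 0)]
end

section
/- Let λ1 > λ2 > λ3 > 0, e = √((λ1−λ2)/(λ1−λ3)), and let ν = (ν1,ν2) satisfy ν2 > 0 and ν1 + λ3ν2 > 0. Define the dual parameter ν̄ = (−λ3ν1 + (λ1λ2 − λ1λ3 − λ2λ3)ν2, ν1 + λ3ν2). Then ν̄ also satisfies ν̄2 > 0 and ν̄1 + λ3ν̄2 > 0; the double dual satisfies ν̄̄ = δν with δ = (λ1−λ3)(λ2−λ3) > 0; and the rotation numbers ρ(ν) = F(arcsin √((λ1−λ3)ν2/(λ1ν2+ν1)), e)/(2K(e)) and ρ(ν̄) (defined analogously)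 satisfy ρ(ν) + ρ(ν̄) = 1/2. -/
open Real

lemma aux_Dpos {e : ℝ} (he : e ^ 2 < 1) (t : ℝ) : 0 < 1 - e ^ 2 * Real.sin t ^ 2 := by
  nlinarith [Real.sin_sq_le_one t, sq_nonneg e, sq_nonneg (e * Real.sin t)]

lemma aux_cont {e : ℝ} (he : e ^ 2 < 1) :
    Continuous (fun τ : ℝ => 1 / Real.sqrt (1 - e ^ 2 * Real.sin τ ^ 2)) := by
  apply Continuous.div continuous_one
  · exact (continuous_const.sub (continuous_const.mul (Real.continuous_sin.pow 2))).sqrt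
  · intro x
    exact (Real.sqrt_pos.2 (aux_Dpos he x)).ne'

lemma aux_Kpos {e : ℝ} (he : e ^ 2 < 1) : 0 < ellK e := by
  apply intervalIntegral.intervalIntegral_pos_of_pos ((aux_cont he).intervalIntegrable _ _)
  · intro x
    exact div_pos one_pos (Real.sqrt_pos.2 (aux_Dpos he x))
  · positivity

/-- Key identity: `F(ω,e) + F(ω̄,e) = K(e)` where `sin ω̄ = cos ω / √(1-e²sin²ω)`. -/
lemma key_sum {e : ℝ} (he1 : e ^ 2 < 1) {ω : ℝ} (hω0 : 0 < ω) (hω1 : ω < Real.pi / 2) :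
    ellF ω e +
      ellF (Real.arcsin (Real.cos ω / Real.sqrt (1 - e ^ 2 * Real.sin ω ^ 2))) e = ellK e := by
  set f : ℝ → ℝ := fun τ => 1 / Real.sqrt (1 - e ^ 2 * Real.sin τ ^ 2) with hf
  set u : ℝ → ℝ := fun t => Real.cos t / Real.sqrt (1 - e ^ 2 * Real.sin t ^ 2) with hu
  set g : ℝ → ℝ := fun t => Real.arcsin (u t) with hg
  have hE : 0 < 1 - e ^ 2 := by nlinarith
  have hEs : 0 < Real.sqrt (1 - e ^ 2) := Real.sqrt_pos.2 hE
  have hEs2 : Real.sqrt (1 - e ^ 2) ^ 2 = 1 - e ^ 2 := Real.sq_sqrt hE.le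
  have hpi : (0:ℝ) < Real.pi / 2 := by positivity
  have huIcc : Set.uIcc ω (Real.pi / 2) = Set.Icc ω (Real.pi / 2) :=
    Set.uIcc_of_le hω1.le
  -- basic facts on the interval
  have hfacts : ∀ t ∈ Set.Icc ω (Real.pi / 2),
      0 < Real.sin t ∧ 0 ≤ Real.cos t ∧ 0 ≤ u t ∧ u t < 1 := by
    intro t ht
    have ht0 : 0 < t := lt_of_lt_of_le hω0 ht.1
    have htpi : t ≤ Real.pi / 2 := ht.2
    have hst : 0 < Real.sin t := Real.sin_pos_of_pos_of_lt_pi ht0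
      (lt_of_le_of_lt htpi (by linarith [Real.pi_pos]))
    have hct : 0 ≤ Real.cos t := Real.cos_nonneg_of_mem_Icc ⟨by linarith, htpi⟩
    have hD : 0 < 1 - e ^ 2 * Real.sin t ^ 2 := aux_Dpos he1 t
    have hSD : 0 < Real.sqrt (1 - e ^ 2 * Real.sin t ^ 2) := Real.sqrt_pos.2 hD
    refine ⟨hst, hct, div_nonneg hct hSD.le, ?_⟩
    rw [hu, div_lt_one hSD]
    have hcs : Real.cos t ^ 2 < 1 - e ^ 2 * Real.sin t ^ 2 := by
      have := Real.sin_sq_add_cos_sq t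
      nlinarith [mul_pos hE (mul_pos hst hst)]
    nlinarith [Real.sq_sqrt hD.le, Real.sqrt_nonneg (1 - e ^ 2 * Real.sin t ^ 2)]
  -- derivative of g
  have hderiv : ∀ t ∈ Set.uIcc ω (Real.pi / 2),
      HasDerivAt g (-Real.sqrt (1 - e ^ 2) / (1 - e ^ 2 * Real.sin t ^ 2)) t := by
    intro t ht
    rw [huIcc] at ht
    obtain ⟨hst, hct, hu0, hu1⟩ := hfacts t ht
    have hD : 0 < 1 - e ^ 2 * Real.sin t ^ 2 := aux_Dpos he1 t
    have hSD : 0 < Real.sqrt (1 - e ^ 2 * Real.sin t ^ 2) := Real.sqrt_pos.2 hD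
    have hSD2 : Real.sqrt (1 - e ^ 2 * Real.sin t ^ 2) ^ 2 = 1 - e ^ 2 * Real.sin t ^ 2 :=
      Real.sq_sqrt hD.le
    have h2 : HasDerivAt (fun s => 1 - e ^ 2 * Real.sin s ^ 2)
        (-(e ^ 2 * (2 * Real.sin t ^ 1 * Real.cos t))) t := by
      simpa using (((Real.hasDerivAt_sin t).pow 2).const_mul (e ^ 2)).const_sub 1
    have h3 : HasDerivAt (fun s => Real.sqrt (1 - e ^ 2 * Real.sin s ^ 2))
        (-(e ^ 2 * (2 * Real.sin t ^ 1 * Real.cos t)) /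
          (2 * Real.sqrt (1 - e ^ 2 * Real.sin t ^ 2))) t := h2.sqrt hD.ne'
    have h4 : HasDerivAt u
        ((-Real.sin t * Real.sqrt (1 - e ^ 2 * Real.sin t ^ 2) -
          Real.cos t * (-(e ^ 2 * (2 * Real.sin t ^ 1 * Real.cos t)) /
            (2 * Real.sqrt (1 - e ^ 2 * Real.sin t ^ 2)))) /
          Real.sqrt (1 - e ^ 2 * Real.sin t ^ 2) ^ 2) t :=
      (Real.hasDerivAt_cos t).div h3 hSD.ne'
    have hne1 : u t ≠ -1 := by intro h; rw [h] at hu0; linarith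
    have hne2 : u t ≠ 1 := hu1.ne
    have h5 := (Real.hasDerivAt_arcsin hne1 hne2).comp t h4
    have h6 : 1 - u t ^ 2 =
        (Real.sqrt (1 - e ^ 2) * Real.sin t / Real.sqrt (1 - e ^ 2 * Real.sin t ^ 2)) ^ 2 := by
      have hpyth := Real.sin_sq_add_cos_sq t
      simp only [hu]
      field_simp
      nlinarith [hEs2, hSD2]
    have h7 : Real.sqrt (1 - u t ^ 2) =
        Real.sqrt (1 - e ^ 2) * Real.sin t / Real.sqrt (1 - e ^ 2 * Real.sin t ^ 2) := by
      rw [h6, Real.sqrt_sq (by positivity)]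
    refine h5.congr_deriv ?_
    symm
    rw [h7]
    have hpyth := Real.sin_sq_add_cos_sq t
    field_simp
    linear_combination (-Real.sqrt (1 - e ^ 2 * Real.sin t ^ 2) ^ 2) * hEs2 +
      (e ^ 2 * (1 - Real.sin t ^ 2)) * hSD2 -
      ((1 - e ^ 2 * Real.sin t ^ 2) * e ^ 2) * hpyth
  -- continuity of the derivative
  have hcontd : ContinuousOn (fun t => -Real.sqrt (1 - e ^ 2) / (1 - e ^ 2 * Real.sin t ^ 2))
      (Set.uIcc ω (Real.pi / 2)) := by
    apply Continuous.continuousOn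
    exact Continuous.div continuous_const
      (continuous_const.sub (continuous_const.mul (Real.continuous_sin.pow 2)))
      (fun x => (aux_Dpos he1 x).ne')
  have hsub := intervalIntegral.integral_comp_smul_deriv hderiv hcontd (aux_cont he1)
  -- identify the integrand with -f
  have hcongr : ∀ t ∈ Set.uIcc ω (Real.pi / 2),
      (-Real.sqrt (1 - e ^ 2) / (1 - e ^ 2 * Real.sin t ^ 2)) • (f ∘ g) t = -f t := by
    intro t ht
    rw [huIcc] at ht
    obtain ⟨hst, hct, hu0, hu1⟩ := hfacts t ht
    have hD : 0 < 1 - e ^ 2 * Real.sin t ^ 2 := aux_Dpos he1 t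
    have hSD : 0 < Real.sqrt (1 - e ^ 2 * Real.sin t ^ 2) := Real.sqrt_pos.2 hD
    have hSD2 : Real.sqrt (1 - e ^ 2 * Real.sin t ^ 2) ^ 2 = 1 - e ^ 2 * Real.sin t ^ 2 :=
      Real.sq_sqrt hD.le
    have hsin_g : Real.sin (g t) = u t := Real.sin_arcsin (by linarith) hu1.le
    have hpyth := Real.sin_sq_add_cos_sq t
    have h8 : 1 - e ^ 2 * Real.sin (g t) ^ 2 =
        (Real.sqrt (1 - e ^ 2) / Real.sqrt (1 - e ^ 2 * Real.sin t ^ 2)) ^ 2 := by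
      rw [hsin_g]
      simp only [hu]
      field_simp
      nlinarith [hEs2, hSD2]
    have h9 : Real.sqrt (1 - e ^ 2 * Real.sin (g t) ^ 2) =
        Real.sqrt (1 - e ^ 2) / Real.sqrt (1 - e ^ 2 * Real.sin t ^ 2) := by
      rw [h8, Real.sqrt_sq (by positivity)]
    have h10 : (f ∘ g) t = 1 / Real.sqrt (1 - e ^ 2 * Real.sin (g t) ^ 2) := rfl
    have h11 : f t = 1 / Real.sqrt (1 - e ^ 2 * Real.sin t ^ 2) := rfl
    rw [h10, h11, h9, smul_eq_mul]
    field_simp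
    linear_combination (-1) * hSD2
  rw [intervalIntegral.integral_congr hcongr] at hsub
  -- compute endpoints
  have hgpi : g (Real.pi / 2) = 0 := by
    simp [hg, hu, Real.cos_pi_div_two]
  have hint : IntervalIntegrable f MeasureTheory.volume 0 ω :=
    (aux_cont he1).intervalIntegrable _ _
  have hint2 : IntervalIntegrable f MeasureTheory.volume ω (Real.pi / 2) :=
    (aux_cont he1).intervalIntegrable _ _
  have hadd : (∫ τ in (0:ℝ)..ω, f τ) + ∫ τ in ω..(Real.pi / 2), f τ
      = ∫ τ in (0:ℝ)..(Real.pi / 2), f τ :=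
    intervalIntegral.integral_add_adjacent_intervals hint hint2
  rw [hgpi, intervalIntegral.integral_neg] at hsub
  have h13 : (∫ x in (g ω)..(0:ℝ), 1 / Real.sqrt (1 - e ^ 2 * Real.sin x ^ 2)) =
      -ellF (g ω) e := by
    rw [intervalIntegral.integral_symm]
    rfl
  have h14 : ellF ω e = ∫ τ in (0:ℝ)..ω, f τ := rfl
  have hK : ellK e = ∫ τ in (0:ℝ)..(Real.pi / 2), f τ := rfl
  rw [h13] at hsub
  show ellF ω e + ellF (g ω) e = ellK e
  have h15 : (∫ τ in ω..(Real.pi / 2), f τ) = ellK e - ellF ω e := by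
    rw [h14, hK]; linarith [hadd]
  rw [h15] at hsub
  linarith [hsub]

/-- Dual parameters: the dual parameter `ν̄` of a valid parameter
`ν` is valid, the double dual is `δν` with `δ = (λ1−λ3)(λ2−λ3) > 0`, and the
rotation numbers satisfy `ρ(ν) + ρ(ν̄) = 1/2`. -/
theorem dual_parameters (l1 l2 l3 ν1 ν2 : ℝ)
    (h12 : l2 < l1) (h23 : l3 < l2) (h3 : 0 < l3)
    (hν2 : 0 < ν2) (hν : 0 < ν1 + l3 * ν2) :
    let e := Real.sqrt ((l1 - l2) / (l1 - l3))
    let ρ := fun a b : ℝ =>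
      ellF (Real.arcsin (Real.sqrt ((l1 - l3) * b / (l1 * b + a)))) e / (2 * ellK e)
    let d1 := -l3 * ν1 + (l1 * l2 - l1 * l3 - l2 * l3) * ν2
    let d2 := ν1 + l3 * ν2
    (0 < d2 ∧ 0 < d1 + l3 * d2) ∧
    (-l3 * d1 + (l1 * l2 - l1 * l3 - l2 * l3) * d2, d1 + l3 * d2) =
      ((l1 - l3) * (l2 - l3) * ν1, (l1 - l3) * (l2 - l3) * ν2) ∧
    0 < (l1 - l3) * (l2 - l3) ∧
    ρ ν1 ν2 + ρ d1 d2 = 1 / 2 := by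
  intro e ρ d1 d2
  have h13 : l3 < l1 := h23.trans h12
  have he2 : e ^ 2 = (l1 - l2) / (l1 - l3) :=
    Real.sq_sqrt (div_nonneg (by linarith) (by linarith))
  have he1 : e ^ 2 < 1 := by
    rw [he2, div_lt_one (by linarith)]; linarith
  refine ⟨⟨hν, ?_⟩, ?_, ?_, ?_⟩
  · show 0 < d1 + l3 * d2
    simp only [d1, d2]
    nlinarith [mul_pos (mul_pos (show (0:ℝ) < l1 - l3 by linarith)
      (show (0:ℝ) < l2 - l3 by linarith)) hν2]
  · simp only [d1, d2, Prod.mk.injEq]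
    constructor <;> ring
  · exact mul_pos (by linarith) (by linarith)
  · -- the rotation-number identity
    have hA : 0 < l1 * ν2 + ν1 := by
      nlinarith [mul_pos (show (0:ℝ) < l1 - l3 by linarith) hν2]
    have hB : 0 < ν1 + l2 * ν2 := by
      nlinarith [mul_pos (show (0:ℝ) < l2 - l3 by linarith) hν2]
    have harg0 : 0 < (l1 - l3) * ν2 / (l1 * ν2 + ν1) :=
      div_pos (mul_pos (by linarith) hν2) hA
    set s1 : ℝ := Real.sqrt ((l1 - l3) * ν2 / (l1 * ν2 + ν1)) with hs1
    have hs1sq : s1 ^ 2 = (l1 - l3) * ν2 / (l1 * ν2 + ν1) :=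
      Real.sq_sqrt harg0.le
    have hs1pos : 0 < s1 := Real.sqrt_pos.2 harg0
    have hs1lt : s1 < 1 := by
      rw [hs1, show (1:ℝ) = Real.sqrt 1 from (Real.sqrt_one).symm]
      apply Real.sqrt_lt_sqrt harg0.le
      rw [div_lt_one hA]; nlinarith
    set ω : ℝ := Real.arcsin s1 with hω
    have hω0 : 0 < ω := Real.arcsin_pos.2 hs1pos
    have hω1 : ω < Real.pi / 2 := Real.arcsin_lt_pi_div_two.2 hs1lt
    have hkey := key_sum he1 hω0 hω1
    have hsinω : Real.sin ω = s1 := Real.sin_arcsin (by linarith) hs1lt.le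
    -- identify the second amplitude
    have hd : l1 * d2 + d1 = (l1 - l3) * (ν1 + l2 * ν2) := by
      simp only [d1, d2]; ring
    have harg : (l1 - l3) * d2 / (l1 * d2 + d1) = (ν1 + l3 * ν2) / (ν1 + l2 * ν2) := by
      rw [hd]
      show (l1 - l3) * (ν1 + l3 * ν2) / ((l1 - l3) * (ν1 + l2 * ν2)) = _
      rw [mul_div_mul_left _ _ (by linarith : l1 - l3 ≠ 0)]
    have hamp : Real.sqrt ((l1 - l3) * d2 / (l1 * d2 + d1)) =
        Real.cos ω / Real.sqrt (1 - e ^ 2 * Real.sin ω ^ 2) := by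
      rw [harg, hsinω, hω, Real.cos_arcsin, ← Real.sqrt_div (by nlinarith [hs1sq])]
      congr 1
      rw [hs1sq, he2]
      have e1 : 1 - (l1 - l3) * ν2 / (l1 * ν2 + ν1) =
          (ν1 + l3 * ν2) / (l1 * ν2 + ν1) := by
        field_simp
        ring
      have e2 : 1 - (l1 - l2) / (l1 - l3) * ((l1 - l3) * ν2 / (l1 * ν2 + ν1)) =
          (ν1 + l2 * ν2) / (l1 * ν2 + ν1) := by
        have h0 : (l1 - l2) / (l1 - l3) * ((l1 - l3) * ν2 / (l1 * ν2 + ν1)) =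
            (l1 - l2) * ν2 / (l1 * ν2 + ν1) := by
          rw [div_mul_div_comm,
            show (l1 - l2) * ((l1 - l3) * ν2) = (l1 - l3) * ((l1 - l2) * ν2) by ring,
            mul_div_mul_left _ _ (by linarith : l1 - l3 ≠ 0)]
        rw [h0]
        field_simp
        ring
      rw [e1, e2, div_div_div_cancel_right₀ hA.ne']
    have hKpos : 0 < ellK e := aux_Kpos he1
    show ellF (Real.arcsin s1) e / (2 * ellK e) +
        ellF (Real.arcsin (Real.sqrt ((l1 - l3) * d2 / (l1 * d2 + d1)))) e / (2 * ellK e) = 1 / 2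
    rw [hamp, ← hω]
    rw [← add_div, hkey]
    rw [div_eq_iff (by positivity)]
    ring
end

section
/- For every e ∈ (0,1) and every φ ∈ (0, π/2), the incomplete elliptic integrals satisfy the strict inequality E(φ,e)·K(e) > F(φ,e)·E(π/2,e). (Equivalently, the function g(z) = 𝓔(zK(e),e) − z𝓔(K(e),e) built from the Jacobi epsilon function is strictly positive for z ∈ (0,1).) -/
open Real

/-- Incomplete elliptic integral of the second kind `E(φ,e)`. -/
noncomputable def ellE (φ e : ℝ) : ℝ :=
  ∫ τ in (0:ℝ)..φ, Real.sqrt (1 - e ^ 2 * Real.sin τ ^ 2)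

/-- the strict inequality `E(φ,e)·K(e) > F(φ,e)·E(π/2,e)` for
`e ∈ (0,1)` and `φ ∈ (0,π/2)`. -/
theorem elliptic_integral_inequality (e φ : ℝ)
    (he0 : 0 < e) (he1 : e < 1) (hφ0 : 0 < φ) (hφ : φ < Real.pi / 2) :
    ellE φ e * ellK e > ellF φ e * ellE (Real.pi / 2) e := by
  set w : ℝ → ℝ := fun τ => 1 - e ^ 2 * Real.sin τ ^ 2 with hw_def
  have he2 : e ^ 2 < 1 := by nlinarith
  have hw_pos : ∀ τ, 0 < w τ := by
    intro τ
    have h1 : Real.sin τ ^ 2 ≤ 1 := Real.sin_sq_le_one τ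
    have h2 : (0:ℝ) ≤ e ^ 2 := sq_nonneg e
    simp only [hw_def]
    nlinarith
  have hsqrt_pos : ∀ τ, 0 < Real.sqrt (w τ) := fun τ => Real.sqrt_pos.mpr (hw_pos τ)
  have hw_cont : Continuous w := by continuity
  have hg_cont : Continuous fun τ => Real.sqrt (w τ) := hw_cont.sqrt
  have hf_cont : Continuous fun τ => 1 / Real.sqrt (w τ) :=
    continuous_const.div hg_cont (fun τ => (hsqrt_pos τ).ne')
  -- monotonicity of w : decreasing on [0, π/2]
  have hw_mono : ∀ {σ τ : ℝ}, 0 ≤ σ → σ ≤ τ → τ ≤ Real.pi / 2 → w τ ≤ w σ := by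
    intro σ τ hσ hστ hτ
    have hsin : Real.sin σ ≤ Real.sin τ := by
      apply Real.sin_le_sin_of_le_of_le_pi_div_two (by linarith [Real.pi_pos]) hτ hστ
    have hsσ : 0 ≤ Real.sin σ :=
      Real.sin_nonneg_of_nonneg_of_le_pi hσ (by linarith [Real.pi_pos])
    have hsq : Real.sin σ ^ 2 ≤ Real.sin τ ^ 2 := by nlinarith
    have := mul_le_mul_of_nonneg_left hsq (sq_nonneg e)
    simp only [hw_def]
    linarith
  set c : ℝ := w φ with hc_def
  have hc_pos : 0 < c := hw_pos φ
  have hc_lt : c < 1 := by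
    have hsφ : 0 < Real.sin φ :=
      Real.sin_pos_of_pos_of_lt_pi hφ0 (by linarith [Real.pi_pos])
    have := mul_pos (pow_pos he0 2) (pow_pos hsφ 2)
    simp only [hc_def, hw_def]
    linarith
  have hφπ : φ ≤ Real.pi / 2 := le_of_lt hφ
  -- Lemma A : c * ellF φ e < ellE φ e
  have hA : c * ellF φ e < ellE φ e := by
    have h1 : (∫ τ in (0:ℝ)..φ, c * (1 / Real.sqrt (w τ))) <
        ∫ τ in (0:ℝ)..φ, Real.sqrt (w τ) := by
      apply intervalIntegral.integral_lt_integral_of_continuousOn_of_le_of_exists_lt hφ0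
        (continuous_const.mul hf_cont).continuousOn hg_cont.continuousOn
      · intro x hx
        have hcw : c ≤ w x := hw_mono (le_of_lt hx.1) hx.2 hφπ
        have := hsqrt_pos x
        show c * (1 / Real.sqrt (w x)) ≤ Real.sqrt (w x)
        rw [mul_one_div]
        calc c / Real.sqrt (w x) ≤ w x / Real.sqrt (w x) := by
              apply div_le_div_of_nonneg_right hcw this.le |>.trans_eq rfl
          _ = Real.sqrt (w x) := Real.div_sqrt
      · refine ⟨0, ⟨le_refl 0, le_of_lt hφ0⟩, ?_⟩
        have : w 0 = 1 := by simp [hw_def]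
        show c * (1 / Real.sqrt (w 0)) < Real.sqrt (w 0)
        rw [this]
        simp [hc_lt]
    rw [intervalIntegral.integral_const_mul] at h1
    exact h1
  -- integrability
  have hintF : ∀ a b : ℝ, IntervalIntegrable (fun τ => 1 / Real.sqrt (w τ)) MeasureTheory.volume a b :=
    fun a b => hf_cont.intervalIntegrable a b
  have hintE : ∀ a b : ℝ, IntervalIntegrable (fun τ => Real.sqrt (w τ)) MeasureTheory.volume a b :=
    fun a b => hg_cont.intervalIntegrable a b
  set I₁ : ℝ := ∫ τ in φ..(Real.pi / 2), 1 / Real.sqrt (w τ) with hI1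
  set I₂ : ℝ := ∫ τ in φ..(Real.pi / 2), Real.sqrt (w τ) with hI2
  -- Lemma B : I₂ ≤ c * I₁
  have hB : I₂ ≤ c * I₁ := by
    have h1 : I₂ ≤ ∫ τ in φ..(Real.pi / 2), c * (1 / Real.sqrt (w τ)) := by
      apply intervalIntegral.integral_mono_on hφπ (hintE _ _)
        ((hintF _ _).const_mul c)
      intro x hx
      have hcw : w x ≤ c := hw_mono (le_of_lt hφ0) hx.1 hx.2
      have := hsqrt_pos x
      rw [mul_one_div]
      calc Real.sqrt (w x) = w x / Real.sqrt (w x) := Real.div_sqrt.symm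
        _ ≤ c / Real.sqrt (w x) := div_le_div_of_nonneg_right hcw this.le |>.trans_eq rfl
    rwa [intervalIntegral.integral_const_mul] at h1
  -- positivity
  have hI1_pos : 0 < I₁ := by
    apply intervalIntegral.integral_pos hφ hf_cont.continuousOn
    · intro x _; positivity
    · exact ⟨φ, ⟨le_refl φ, hφπ⟩, by positivity⟩
  have hF_pos : 0 < ellF φ e := by
    apply intervalIntegral.integral_pos hφ0 hf_cont.continuousOn
    · intro x _
      have := hsqrt_pos x
      positivity
    · exact ⟨0, ⟨le_refl 0, le_of_lt hφ0⟩, by have := hsqrt_pos 0; positivity⟩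
  -- splitting
  have hK_split : ellK e = ellF φ e + I₁ := by
    rw [ellK, ellF, ellF, hI1]
    exact (intervalIntegral.integral_add_adjacent_intervals (hintF 0 φ) (hintF φ _)).symm
  have hE_split : ellE (Real.pi / 2) e = ellE φ e + I₂ := by
    rw [ellE, ellE, hI2]
    exact (intervalIntegral.integral_add_adjacent_intervals (hintE 0 φ) (hintE φ _)).symm
  rw [hK_split, hE_split]
  have key : ellF φ e * I₂ < ellE φ e * I₁ := by
    calc ellF φ e * I₂ ≤ ellF φ e * (c * I₁) :=
          mul_le_mul_of_nonneg_left hB (le_of_lt hF_pos)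
      _ = (c * ellF φ e) * I₁ := by ring
      _ < ellE φ e * I₁ := mul_lt_mul_of_pos_right hA hI1_pos
  nlinarith
end

section
/- For (e,f) ∈ Δ = {(e,f) : 0 < f < e < 1}, the billiard rotation number satisfies ρ̂(e,f) = 1/4 if and only if e² + f⁴ − 2f² = 0. In particular, for e ∈ (0,1) with e' = √(1−e²), one has the elliptic integral identity F(arcsin(1/√(1+e')), e) = K(e)/2. -/
open Real

lemma Dpos {e : ℝ} (he : e^2 < 1) (τ : ℝ) : 0 < 1 - e^2 * Real.sin τ ^2 := by
  nlinarith [Real.sin_sq_le_one τ, sq_nonneg e]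

lemma integrand_cont {e : ℝ} (he : e^2 < 1) :
    Continuous (fun τ : ℝ => 1 / Real.sqrt (1 - e^2 * Real.sin τ ^2)) := by
  apply Continuous.div continuous_const
  · exact (Real.continuous_sqrt.comp (by continuity))
  · intro τ
    exact ne_of_gt (Real.sqrt_pos.2 (Dpos he τ))

lemma ellF_hasDerivAt {e : ℝ} (he : e^2 < 1) (φ : ℝ) :
    HasDerivAt (fun φ => ellF φ e) (1 / Real.sqrt (1 - e^2 * Real.sin φ ^2)) φ := by
  have hc := integrand_cont he
  exact intervalIntegral.integral_hasDerivAt_right ((hc.intervalIntegrable _ _))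
    (hc.aestronglyMeasurable.stronglyMeasurableAtFilter) hc.continuousAt

lemma ellF_strictMono {e : ℝ} (he : e^2 < 1) : StrictMono (fun φ => ellF φ e) := by
  apply strictMono_of_deriv_pos
  intro x
  rw [(ellF_hasDerivAt he x).deriv]
  exact div_pos one_pos (Real.sqrt_pos.2 (Dpos he x))

lemma ellF_continuous {e : ℝ} (he : e^2 < 1) : Continuous (fun φ => ellF φ e) :=
  continuous_iff_continuousAt.2 (fun φ => (ellF_hasDerivAt he φ).differentiableAt.continuousAt)

section core

-- derivative of g τ = arcsin (cos τ / sqrt (1 - e^2 sin τ^2)) on (0, π/2)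
lemma g_hasDerivAt {e τ : ℝ} (he2 : e^2 < 1) (ht0 : 0 < τ) (ht1 : τ < π/2) :
    HasDerivAt (fun τ => Real.arcsin (Real.cos τ / Real.sqrt (1 - e^2 * Real.sin τ^2)))
      (-(Real.sqrt (1 - e^2) / (1 - e^2 * Real.sin τ^2))) τ := by
  have hD := Dpos he2 τ
  set d := Real.sqrt (1 - e^2 * Real.sin τ^2) with hd
  have hdpos : 0 < d := Real.sqrt_pos.2 hD
  have hdsq : d^2 = 1 - e^2 * Real.sin τ^2 := Real.sq_sqrt hD.le
  have hsinpos : 0 < Real.sin τ := Real.sin_pos_of_pos_of_lt_pi ht0 (by linarith [Real.pi_pos])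
  have hcospos : 0 < Real.cos τ := Real.cos_pos_of_mem_Ioo ⟨by linarith, ht1⟩
  have hpyth := Real.sin_sq_add_cos_sq τ
  -- derivative of D
  have hDder : HasDerivAt (fun x => 1 - e^2 * Real.sin x^2)
      (-(e^2 * (2 * Real.sin τ ^ 1 * Real.cos τ))) τ :=
    (((Real.hasDerivAt_sin τ).pow 2).const_mul (e^2)).const_sub 1
  -- derivative of sqrt D
  have hsder : HasDerivAt (fun x => Real.sqrt (1 - e^2 * Real.sin x^2))
      (1 / (2 * d) * (-(e^2 * (2 * Real.sin τ ^ 1 * Real.cos τ)))) τ :=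
    (Real.hasDerivAt_sqrt (ne_of_gt hD)).comp τ hDder
  -- derivative of h
  have hhder : HasDerivAt (fun x => Real.cos x / Real.sqrt (1 - e^2 * Real.sin x^2))
      ((-Real.sin τ * d - Real.cos τ * (1 / (2 * d) * (-(e^2 * (2 * Real.sin τ ^ 1 * Real.cos τ))))) / d^2) τ :=
    (Real.hasDerivAt_cos τ).div hsder (ne_of_gt hdpos)
  -- bounds on h
  have hhlt : Real.cos τ / d < 1 := by
    rw [div_lt_one hdpos]
    have hcos2 : Real.cos τ^2 < d^2 := by
      nlinarith [mul_pos (show (0:ℝ) < 1 - e^2 by nlinarith) (mul_pos hsinpos hsinpos)]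
    nlinarith
  have hhpos : 0 < Real.cos τ / d := div_pos hcospos hdpos
  have harc := (Real.hasDerivAt_arcsin (by linarith : Real.cos τ / d ≠ -1)
    (ne_of_lt hhlt)).comp τ hhder
  refine HasDerivAt.congr_deriv harc ?_
  -- now the algebra
  have he'sq : Real.sqrt (1 - e^2)^2 = 1 - e^2 := Real.sq_sqrt (by nlinarith)
  have he'pos : 0 < Real.sqrt (1 - e^2) := Real.sqrt_pos.2 (by nlinarith)
  have h1 : 1 - (Real.cos τ / d)^2 = (Real.sqrt (1 - e^2) * Real.sin τ / d)^2 := by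
    field_simp
    linear_combination hdsq - hpyth - Real.sin τ^2 * he'sq
  rw [h1, Real.sqrt_sq (by positivity)]
  have h2 : (-Real.sin τ * d - Real.cos τ * (1 / (2 * d) * (-(e^2 * (2 * Real.sin τ ^ 1 * Real.cos τ)))))
      = -(Real.sqrt (1 - e^2)^2 * Real.sin τ) / d := by
    field_simp
    linear_combination -(hdsq - he'sq - e^2 * hpyth)
  rw [h2]
  rw [← hdsq]
  field_simp

end core

lemma Phi_hasDerivAt {e τ : ℝ} (he2 : e^2 < 1) (ht0 : 0 < τ) (ht1 : τ < π/2) :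
    HasDerivAt (fun τ => ellF (Real.arcsin (Real.cos τ / Real.sqrt (1 - e^2 * Real.sin τ^2))) e)
      (-(1 / Real.sqrt (1 - e^2 * Real.sin τ^2))) τ := by
  have hD := Dpos he2 τ
  set d := Real.sqrt (1 - e^2 * Real.sin τ^2) with hd
  have hdpos : 0 < d := Real.sqrt_pos.2 hD
  have hdsq : d^2 = 1 - e^2 * Real.sin τ^2 := Real.sq_sqrt hD.le
  have hsinpos : 0 < Real.sin τ := Real.sin_pos_of_pos_of_lt_pi ht0 (by linarith [Real.pi_pos])
  have hcospos : 0 < Real.cos τ := Real.cos_pos_of_mem_Ioo ⟨by linarith, ht1⟩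
  have hpyth := Real.sin_sq_add_cos_sq τ
  have he'sq : Real.sqrt (1 - e^2)^2 = 1 - e^2 := Real.sq_sqrt (by nlinarith)
  have he'pos : 0 < Real.sqrt (1 - e^2) := Real.sqrt_pos.2 (by nlinarith)
  have hcos2 : Real.cos τ^2 < d^2 := by
    nlinarith [mul_pos (show (0:ℝ) < 1 - e^2 by nlinarith) (mul_pos hsinpos hsinpos)]
  have hhle : Real.cos τ / d ≤ 1 := by rw [div_le_one hdpos]; nlinarith
  have hhge : -1 ≤ Real.cos τ / d := by linarith [div_pos hcospos hdpos]
  have hg := g_hasDerivAt he2 ht0 ht1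
  have hF := ellF_hasDerivAt he2 (Real.arcsin (Real.cos τ / d))
  have hcomp := hF.comp τ hg
  refine HasDerivAt.congr_deriv hcomp ?_
  rw [Real.sin_arcsin hhge hhle]
  have h1 : 1 - e^2 * (Real.cos τ / d)^2 = (1 - e^2) / d^2 := by
    field_simp
    linear_combination hdsq - e^2 * hpyth
  rw [h1, Real.sqrt_div (by nlinarith) _, Real.sqrt_sq hdpos.le]
  field_simp
  linear_combination -hdsq

lemma ellF_zero (e : ℝ) : ellF 0 e = 0 := intervalIntegral.integral_same

lemma half_K {e : ℝ} (he0 : 0 < e) (he1 : e < 1) :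
    ellF (Real.arcsin (1 / Real.sqrt (1 + Real.sqrt (1 - e ^ 2)))) e = ellK e / 2 := by
  have he2 : e^2 < 1 := by nlinarith
  set e' := Real.sqrt (1 - e^2) with he'
  have he'pos : 0 < e' := Real.sqrt_pos.2 (by nlinarith)
  have he'sq : e'^2 = 1 - e^2 := Real.sq_sqrt (by nlinarith)
  have h1e' : (0:ℝ) < 1 + e' := by linarith
  set s := 1 / Real.sqrt (1 + e') with hs
  have hsq1 : (1:ℝ) < Real.sqrt (1 + e') := by
    nlinarith [Real.sq_sqrt h1e'.le, Real.sqrt_nonneg (1+e')]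
  have hs0 : 0 < s := by rw [hs]; positivity
  have hs1 : s < 1 := by rw [hs, div_lt_one (by linarith)]; exact hsq1
  have hssq : s^2 = 1/(1+e') := by
    rw [hs, div_pow, one_pow, Real.sq_sqrt h1e'.le]
  set φ₀ := Real.arcsin s with hφ₀
  have hφ₀pos : 0 < φ₀ := Real.arcsin_pos.2 hs0
  have hφ₀lt : φ₀ < π/2 := Real.arcsin_lt_pi_div_two.2 hs1
  have hsinφ₀ : Real.sin φ₀ = s := Real.sin_arcsin (by linarith) hs1.le
  set H := fun τ => ellF (Real.arcsin (Real.cos τ / Real.sqrt (1 - e^2 * Real.sin τ^2))) e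
    + ellF τ e with hH
  have hgc : Continuous (fun τ => Real.arcsin (Real.cos τ / Real.sqrt (1 - e^2 * Real.sin τ^2))) := by
    apply Real.continuous_arcsin.comp
    apply Real.continuous_cos.div (Real.continuous_sqrt.comp (by continuity))
    intro τ; exact ne_of_gt (Real.sqrt_pos.2 (Dpos he2 τ))
  have hHcont : Continuous H := ((ellF_continuous he2).comp hgc).add (ellF_continuous he2)
  have hder : ∀ x ∈ interior (Set.Icc 0 φ₀), HasDerivAt H 0 x := by
    rw [interior_Icc]
    intro x hx
    have := (Phi_hasDerivAt he2 hx.1 (lt_trans hx.2 hφ₀lt)).add (ellF_hasDerivAt he2 x)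
    refine HasDerivAt.congr_deriv this ?_
    ring
  have hdiff : DifferentiableOn ℝ H (interior (Set.Icc 0 φ₀)) :=
    fun x hx => (hder x hx).differentiableAt.differentiableWithinAt
  have hmono : MonotoneOn H (Set.Icc 0 φ₀) :=
    monotoneOn_of_deriv_nonneg (convex_Icc 0 φ₀) hHcont.continuousOn hdiff
      (fun x hx => by rw [(hder x hx).deriv])
  have hanti : AntitoneOn H (Set.Icc 0 φ₀) :=
    antitoneOn_of_deriv_nonpos (convex_Icc 0 φ₀) hHcont.continuousOn hdiff
      (fun x hx => by rw [(hder x hx).deriv])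
  have hmem0 : (0:ℝ) ∈ Set.Icc 0 φ₀ := ⟨le_refl _, hφ₀pos.le⟩
  have hmemφ : φ₀ ∈ Set.Icc 0 φ₀ := ⟨hφ₀pos.le, le_refl _⟩
  have hkey : H 0 = H φ₀ :=
    le_antisymm (hmono hmem0 hmemφ hφ₀pos.le) (hanti hmem0 hmemφ hφ₀pos.le)
  have hH0 : H 0 = ellK e := by
    rw [hH]
    simp only [Real.sin_zero, Real.cos_zero, ellF_zero]
    norm_num [Real.sqrt_one, Real.arcsin_one, ellK]
  have hDφ₀ : 1 - e^2 * Real.sin φ₀^2 = e' := by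
    rw [hsinφ₀, hssq]
    field_simp
    linear_combination -he'sq
  have hcosφ₀ : Real.cos φ₀ = Real.sqrt e' / Real.sqrt (1 + e') := by
    rw [hφ₀, Real.cos_arcsin, ← Real.sqrt_div he'pos.le]
    congr 1
    rw [hssq]
    field_simp
    ring
  have hgφ₀ : Real.cos φ₀ / Real.sqrt (1 - e^2 * Real.sin φ₀^2) = s := by
    rw [hDφ₀, hcosφ₀, hs]
    rw [div_right_comm, div_self (ne_of_gt (Real.sqrt_pos.2 he'pos))]
  have hHφ : H φ₀ = 2 * ellF φ₀ e := by
    rw [hH]; simp only [hgφ₀, ← hφ₀]; ring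
  have := hkey
  rw [hH0, hHφ] at this
  linarith

lemma ellK_pos {e : ℝ} (he2 : e^2 < 1) : 0 < ellK e := by
  have h := ellF_strictMono he2 (show (0:ℝ) < π/2 by positivity)
  simpa [ellF_zero, ellK] using h

/-- on `Δ`, `ρ̂(e,f) = 1/4` iff `e² + f⁴ − 2f² = 0`; in particular,
with `e' = √(1−e²)`, one has `F(arcsin(1/√(1+e')), e) = K(e)/2`. -/
theorem period_four_porism :
    (∀ e f : ℝ, 0 < f → f < e → e < 1 →
      (rhoHat e f = 1 / 4 ↔ e ^ 2 + f ^ 4 - 2 * f ^ 2 = 0)) ∧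
    (∀ e : ℝ, 0 < e → e < 1 →
      ellF (Real.arcsin (1 / Real.sqrt (1 + Real.sqrt (1 - e ^ 2)))) e =
        ellK e / 2) := by
  constructor
  · intro e f hf0 hfe he1
    have he0 : 0 < e := lt_trans hf0 hfe
    have he2 : e^2 < 1 := by nlinarith
    have hf1 : f < 1 := lt_trans hfe he1
    have hKpos := ellK_pos he2
    have he'pos : 0 < Real.sqrt (1 - e^2) := Real.sqrt_pos.2 (by nlinarith)
    have he'sq : Real.sqrt (1 - e^2)^2 = 1 - e^2 := Real.sq_sqrt (by nlinarith)
    set e' := Real.sqrt (1 - e^2) with he'def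
    have h1e' : (0:ℝ) < 1 + e' := by linarith
    have hsq1 : 1 < Real.sqrt (1 + e') := by
      nlinarith [Real.sq_sqrt h1e'.le, Real.sqrt_nonneg (1+e')]
    have hs1 : 1 / Real.sqrt (1+e') < 1 := by rw [div_lt_one (by linarith)]; exact hsq1
    set A := (e ^ 2 - f ^ 2) / (e ^ 2 * (1 - f ^ 2)) with hA
    have hdenpos : 0 < e^2 * (1 - f^2) := by nlinarith
    have hApos : 0 < A := div_pos (by nlinarith) hdenpos
    have hAle : A ≤ 1 := by rw [hA, div_le_one hdenpos]; nlinarith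
    have hsA1 : Real.sqrt A ≤ 1 := by
      calc Real.sqrt A ≤ Real.sqrt 1 := Real.sqrt_le_sqrt hAle
      _ = 1 := Real.sqrt_one
    have step1 : rhoHat e f = 1 / 4 ↔ ellF (omegaHat e f) e = ellK e / 2 := by
      unfold rhoHat
      rw [div_eq_iff (ne_of_gt (by linarith : (0:ℝ) < 2 * ellK e))]
      constructor <;> intro h <;> linarith
    have step2 : ellF (omegaHat e f) e = ellK e / 2 ↔
        omegaHat e f = Real.arcsin (1 / Real.sqrt (1 + e')) := by
      rw [← half_K he0 he1]
      exact ⟨fun h => (ellF_strictMono he2).injective h, fun h => by rw [h]⟩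
    have step3 : omegaHat e f = Real.arcsin (1 / Real.sqrt (1 + e')) ↔
        Real.sqrt A = 1 / Real.sqrt (1 + e') := by
      unfold omegaHat
      rw [Real.arcsin_inj (by linarith [Real.sqrt_nonneg A]) hsA1
        (le_trans (by norm_num : (-1:ℝ) ≤ 0) (by positivity)) hs1.le]
    have step4 : Real.sqrt A = 1 / Real.sqrt (1 + e') ↔ A = 1 / (1 + e') := by
      rw [one_div, one_div, ← Real.sqrt_inv, Real.sqrt_inj hApos.le (by positivity)]
    rw [step1, step2, step3, step4]
    constructor
    · intro h
      rw [hA, div_eq_div_iff hdenpos.ne' h1e'.ne'] at h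
      -- h : (e²-f²)*(1+e') = 1*(e²*(1-f²))
      have hlin : e' * (e^2 - f^2) = f^2 * e'^2 := by linear_combination h - f^2 * he'sq
      have hcancel : e^2 - f^2 = f^2 * e' := by
        have := mul_left_cancel₀ (ne_of_gt he'pos) (by linear_combination hlin : e' * (e^2 - f^2) = e' * (f^2 * e'))
        exact this
      have hsq : (e^2 - f^2)^2 = f^4 * (1 - e^2) := by
        calc (e^2-f^2)^2 = (f^2*e')^2 := by rw [hcancel]
        _ = f^4 * e'^2 := by ring
        _ = f^4 * (1 - e^2) := by rw [he'sq]
      have hz : e^2 * (e^2 + f^4 - 2*f^2) = 0 := by linear_combination hsq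
      rcases mul_eq_zero.1 hz with h' | h'
      · exact absurd h' (by positivity)
      · exact h'
    · intro hX
      have h1f : 1 - e^2 = (1 - f^2)^2 := by linear_combination -hX
      have he'val : e' = 1 - f^2 := by
        rw [he'def, h1f, Real.sqrt_sq (by nlinarith)]
      rw [hA, he'val, div_eq_div_iff hdenpos.ne' (by nlinarith : (1 + (1 - f^2)) ≠ 0)]
      linear_combination hX
  · intro e he0 he1
    exact half_K he0 he1
end
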